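/- arXiv:1706.07707 — 3 statements merged into one kernel-verified Lean document; each statement's English description precedes it below -/
import Mathlib

section
/- Suppose in addition that ε < (1−γ)/(2nΓγ). Then there exists a constant F > 0 such that for every agent i ∈ {1,…,n} and every K ≥ 0, Σ_{k=0}^K g_k ‖z̄^{k+1} − x_i^{k+1}‖ ≤ F Σ_{k=0}^K α_k². -/
open Finset Filter
open scoped RealInnerProductSpace


private lemma ddps_geo {γ : ℝ} (hγ0 : 0 < γ) (hγ1 : γ < 1) (m : ℕ) :
    ∑ t ∈ range m, γ ^ t ≤ 1 / (1 - γ) := by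
  have hγs : 0 < 1 - γ := by linarith
  rw [geom_sum_eq (ne_of_lt hγ1) m]
  rw [show γ ^ m - 1 = -(1 - γ ^ m) by ring, show γ - 1 = -(1 - γ) by ring, neg_div_neg_eq]
  rw [div_le_div_iff₀ hγs hγs]
  have := pow_nonneg hγ0.le m
  nlinarith

private lemma ddps_geoW {γ : ℝ} (hγ0 : 0 < γ) (hγ1 : γ < 1) (k : ℕ) :
    ∑ s ∈ range (k + 1), γ ^ (k - s) ≤ 1 / (1 - γ) := by
  have := Finset.sum_range_reflect (fun t => γ ^ t) (k + 1)
  simp only [Nat.add_sub_cancel] at this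
  calc ∑ s ∈ range (k + 1), γ ^ (k - s) = ∑ s ∈ range (k + 1), γ ^ s := this
    _ ≤ 1 / (1 - γ) := ddps_geo hγ0 hγ1 _

private lemma ddps_geoR {γ : ℝ} (hγ0 : 0 < γ) (hγ1 : γ < 1) (k : ℕ) :
    ∑ s ∈ range (k - 1), γ ^ (k - 1 - s) ≤ γ / (1 - γ) := by
  have h1 : ∑ s ∈ range (k - 1), γ ^ (k - 1 - s) = γ * ∑ s ∈ range (k - 1), γ ^ (k - 2 - s) := by
    rw [Finset.mul_sum]
    refine Finset.sum_congr rfl fun s hs => ?_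
    rw [Finset.mem_range] at hs
    have : k - 1 - s = (k - 2 - s) + 1 := by omega
    rw [this, pow_succ]; ring
  rw [h1]
  have h2 : ∑ s ∈ range (k - 1), γ ^ (k - 2 - s) ≤ 1 / (1 - γ) := by
    have hrf := Finset.sum_range_reflect (fun t => γ ^ t) (k - 1)
    simp only [show k - 1 - 1 = k - 2 from by omega] at hrf
    calc ∑ s ∈ range (k - 1), γ ^ (k - 2 - s)
        = ∑ s ∈ range (k - 1), γ ^ s := hrf
      _ ≤ 1 / (1 - γ) := ddps_geo hγ0 hγ1 _
  calc γ * ∑ s ∈ range (k - 1), γ ^ (k - 2 - s) ≤ γ * (1 / (1 - γ)) :=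
        mul_le_mul_of_nonneg_left h2 hγ0.le
    _ = γ / (1 - γ) := by ring

private lemma ddps_colGeo {γ : ℝ} (hγ0 : 0 < γ) (hγ1 : γ < 1) (N s : ℕ) :
    ∑ k ∈ range N, (if s ≤ k then γ ^ (k - s) else 0) ≤ 1 / (1 - γ) := by
  have h1 : ∑ k ∈ range N, (if s ≤ k then γ ^ (k - s) else 0)
      = ∑ k ∈ Ico s N, γ ^ (k - s) := by
    rw [← Finset.sum_filter]
    congr 1
    ext k; simp [Finset.mem_filter, Finset.mem_range, Finset.mem_Ico]; omega
  rw [h1, Finset.sum_Ico_eq_sum_range]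
  calc ∑ k ∈ range (N - s), γ ^ (s + k - s) = ∑ k ∈ range (N - s), γ ^ k := by
        refine Finset.sum_congr rfl fun k _ => ?_; congr 1; omega
    _ ≤ 1 / (1 - γ) := ddps_geo hγ0 hγ1 _

private lemma ddps_colGeoR {γ : ℝ} (hγ0 : 0 < γ) (hγ1 : γ < 1) (N s : ℕ) :
    ∑ k ∈ range N, (if s < k - 1 then γ ^ (k - 1 - s) else 0) ≤ γ / (1 - γ) := by
  have h1 : ∑ k ∈ range N, (if s < k - 1 then γ ^ (k - 1 - s) else 0)
      = ∑ k ∈ Ico (s + 2) N, γ ^ (k - 1 - s) := by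
    rw [← Finset.sum_filter]
    congr 1
    ext k; simp [Finset.mem_filter, Finset.mem_range, Finset.mem_Ico]; omega
  rw [h1, Finset.sum_Ico_eq_sum_range]
  have h2 : ∀ k, γ ^ (s + 2 + k - 1 - s) = γ * γ ^ k := by
    intro k
    have : s + 2 + k - 1 - s = k + 1 := by omega
    rw [this, pow_succ]; ring
  calc ∑ k ∈ range (N - (s + 2)), γ ^ (s + 2 + k - 1 - s)
      = γ * ∑ k ∈ range (N - (s + 2)), γ ^ k := by
        rw [Finset.mul_sum]; exact Finset.sum_congr rfl fun k _ => h2 k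
    _ ≤ γ * (1 / (1 - γ)) := mul_le_mul_of_nonneg_left (ddps_geo hγ0 hγ1 _) hγ0.le
    _ = γ / (1 - γ) := by ring

/-- triangular sum swap -/
private lemma ddps_swap (N : ℕ) (m : ℕ → ℕ) (hm : ∀ k < N, m k ≤ N) (F : ℕ → ℕ → ℝ) :
    ∑ k ∈ range N, ∑ s ∈ range (m k), F k s
      = ∑ s ∈ range N, ∑ k ∈ range N, (if s < m k then F k s else 0) := by
  rw [Finset.sum_comm]
  refine Finset.sum_congr rfl fun k hk => ?_
  rw [Finset.mem_range] at hk
  rw [← Finset.sum_filter]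
  congr 1
  ext s; simp [Finset.mem_filter, Finset.mem_range]
  have := hm k hk; omega

private lemma ddps_seq (γ a c : ℝ) (hγ0 : 0 < γ) (hγ1 : γ < 1) (ha : 0 ≤ a) (hc : 0 ≤ c)
    (hsmall : c * γ ≤ (1 - γ) / 2)
    (g al : ℕ → ℝ) (hg0 : ∀ k, 0 ≤ g k) (hal0 : ∀ k, 0 ≤ al k)
    (hrec : ∀ k, g k ≤ a * al k + c * ∑ s ∈ range (k - 1), γ ^ (k - 1 - s) * g s)
    (K : ℕ) :
    ∑ k ∈ range (K + 1), g k * (∑ s ∈ range (k + 1), γ ^ (k - s) * g s)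
      ≤ (4 * a ^ 2 / (1 - γ)) * ∑ k ∈ range (K + 1), (al k) ^ 2 := by
  have hγs : 0 < 1 - γ := by linarith
  set N := K + 1 with hN
  set Q := ∑ k ∈ range N, (g k) ^ 2 with hQ
  set Aq := ∑ k ∈ range N, (al k) ^ 2 with hAq
  have hQ0 : 0 ≤ Q := Finset.sum_nonneg fun k _ => sq_nonneg _
  have hAq0 : 0 ≤ Aq := Finset.sum_nonneg fun k _ => sq_nonneg _
  -- Step A : LHS ≤ (1/(1-γ)) * Q
  have stepA : ∑ k ∈ range N, g k * (∑ s ∈ range (k + 1), γ ^ (k - s) * g s)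
      ≤ (1 / (1 - γ)) * Q := by
    have h1 : ∀ k, g k * (∑ s ∈ range (k + 1), γ ^ (k - s) * g s)
        = ∑ s ∈ range (k + 1), γ ^ (k - s) * (g k * g s) := by
      intro k; rw [Finset.mul_sum]; exact Finset.sum_congr rfl fun s _ => by ring
    have h2 : ∀ k s : ℕ, γ ^ (k - s) * (g k * g s)
        ≤ γ ^ (k - s) * ((g k ^ 2 + g s ^ 2) / 2) := by
      intro k s
      refine mul_le_mul_of_nonneg_left ?_ (pow_nonneg hγ0.le _)
      nlinarith [sq_nonneg (g k - g s)]
    calc ∑ k ∈ range N, g k * (∑ s ∈ range (k + 1), γ ^ (k - s) * g s)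
        = ∑ k ∈ range N, ∑ s ∈ range (k + 1), γ ^ (k - s) * (g k * g s) :=
          Finset.sum_congr rfl fun k _ => h1 k
      _ ≤ ∑ k ∈ range N, ∑ s ∈ range (k + 1), γ ^ (k - s) * ((g k ^ 2 + g s ^ 2) / 2) :=
          Finset.sum_le_sum fun k _ => Finset.sum_le_sum fun s _ => h2 k s
      _ = (1/2) * (∑ k ∈ range N, g k ^ 2 * ∑ s ∈ range (k + 1), γ ^ (k - s))
          + (1/2) * (∑ k ∈ range N, ∑ s ∈ range (k + 1), γ ^ (k - s) * g s ^ 2) := by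
          rw [Finset.mul_sum, Finset.mul_sum, ← Finset.sum_add_distrib]
          refine Finset.sum_congr rfl fun k _ => ?_
          rw [Finset.mul_sum, Finset.mul_sum, Finset.mul_sum, ← Finset.sum_add_distrib]
          exact Finset.sum_congr rfl fun s _ => by ring
      _ ≤ (1/2) * ((1 / (1 - γ)) * Q) + (1/2) * ((1 / (1 - γ)) * Q) := by
          gcongr (1/2) * ?_ + (1/2) * ?_
          · calc ∑ k ∈ range N, g k ^ 2 * ∑ s ∈ range (k + 1), γ ^ (k - s)
                ≤ ∑ k ∈ range N, g k ^ 2 * (1 / (1 - γ)) :=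
                  Finset.sum_le_sum fun k _ =>
                    mul_le_mul_of_nonneg_left (ddps_geoW hγ0 hγ1 k) (sq_nonneg _)
              _ = (1 / (1 - γ)) * Q := by rw [hQ, Finset.mul_sum]; exact Finset.sum_congr rfl fun k _ => by ring
          · rw [ddps_swap N (fun k => k + 1) (fun k hk => by omega) (fun k s => γ ^ (k - s) * g s ^ 2)]
            calc ∑ s ∈ range N, ∑ k ∈ range N, (if s < k + 1 then γ ^ (k - s) * g s ^ 2 else 0)
                = ∑ s ∈ range N, g s ^ 2 * ∑ k ∈ range N, (if s ≤ k then γ ^ (k - s) else 0) := by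
                  refine Finset.sum_congr rfl fun s _ => ?_
                  rw [Finset.mul_sum]
                  refine Finset.sum_congr rfl fun k _ => ?_
                  by_cases h : s ≤ k
                  · rw [if_pos (by omega : s < k + 1), if_pos h]; ring
                  · rw [if_neg (by omega : ¬ s < k + 1), if_neg h]; ring
              _ ≤ ∑ s ∈ range N, g s ^ 2 * (1 / (1 - γ)) :=
                  Finset.sum_le_sum fun s _ =>
                    mul_le_mul_of_nonneg_left (ddps_colGeo hγ0 hγ1 N s) (sq_nonneg _)
              _ = (1 / (1 - γ)) * Q := by rw [hQ, Finset.mul_sum]; exact Finset.sum_congr rfl fun k _ => by ring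
      _ = (1 / (1 - γ)) * Q := by ring
  -- Step C : ∑ R_k^2 ≤ (γ/(1-γ))^2 * Q
  set R : ℕ → ℝ := fun k => ∑ s ∈ range (k - 1), γ ^ (k - 1 - s) * g s with hR
  have hR0 : ∀ k, 0 ≤ R k := fun k => Finset.sum_nonneg fun s _ =>
    mul_nonneg (pow_nonneg hγ0.le _) (hg0 s)
  have stepC : ∑ k ∈ range N, (R k) ^ 2 ≤ (γ / (1 - γ))^2 * Q := by
    have hCS : ∀ k, (R k) ^ 2 ≤ (γ / (1 - γ)) * ∑ s ∈ range (k - 1), γ ^ (k - 1 - s) * g s ^ 2 := by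
      intro k
      set β := Real.sqrt γ with hβ
      have hβ2 : β ^ 2 = γ := Real.sq_sqrt hγ0.le
      have hkey : ∀ e : ℕ, (β ^ e) ^ 2 = γ ^ e := by
        intro e; rw [← pow_mul, mul_comm e 2, pow_mul, hβ2]
      have h1 : R k = ∑ s ∈ range (k - 1), (β ^ (k - 1 - s)) * (β ^ (k - 1 - s) * g s) := by
        refine Finset.sum_congr rfl fun s _ => ?_
        rw [← mul_assoc, ← sq, hkey]
      have h2 := Finset.sum_mul_sq_le_sq_mul_sq (range (k - 1))
        (fun s => β ^ (k - 1 - s)) (fun s => β ^ (k - 1 - s) * g s)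
      rw [← h1] at h2
      have h3 : ∑ s ∈ range (k - 1), (β ^ (k - 1 - s)) ^ 2 ≤ γ / (1 - γ) := by
        calc ∑ s ∈ range (k - 1), (β ^ (k - 1 - s)) ^ 2
            = ∑ s ∈ range (k - 1), γ ^ (k - 1 - s) :=
              Finset.sum_congr rfl fun s _ => hkey _
          _ ≤ γ / (1 - γ) := ddps_geoR hγ0 hγ1 k
      have h4 : ∑ s ∈ range (k - 1), (β ^ (k - 1 - s) * g s) ^ 2
          = ∑ s ∈ range (k - 1), γ ^ (k - 1 - s) * g s ^ 2 := by
        refine Finset.sum_congr rfl fun s _ => ?_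
        rw [mul_pow, hkey]
      rw [h4] at h2
      calc (R k) ^ 2 ≤ (∑ s ∈ range (k - 1), (β ^ (k - 1 - s)) ^ 2)
            * ∑ s ∈ range (k - 1), γ ^ (k - 1 - s) * g s ^ 2 := h2
        _ ≤ (γ / (1 - γ)) * ∑ s ∈ range (k - 1), γ ^ (k - 1 - s) * g s ^ 2 := by
            refine mul_le_mul_of_nonneg_right h3 ?_
            exact Finset.sum_nonneg fun s _ => mul_nonneg (pow_nonneg hγ0.le _) (sq_nonneg _)
    calc ∑ k ∈ range N, (R k) ^ 2
        ≤ ∑ k ∈ range N, (γ / (1 - γ)) * ∑ s ∈ range (k - 1), γ ^ (k - 1 - s) * g s ^ 2 :=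
          Finset.sum_le_sum fun k _ => hCS k
      _ = (γ / (1 - γ)) * ∑ k ∈ range N, ∑ s ∈ range (k - 1), γ ^ (k - 1 - s) * g s ^ 2 := by
          rw [Finset.mul_sum]
      _ ≤ (γ / (1 - γ)) * ((γ / (1 - γ)) * Q) := by
          refine mul_le_mul_of_nonneg_left ?_ (by positivity)
          rw [ddps_swap N (fun k => k - 1) (fun k hk => by omega) (fun k s => γ ^ (k - 1 - s) * g s ^ 2)]
          calc ∑ s ∈ range N, ∑ k ∈ range N, (if s < k - 1 then γ ^ (k - 1 - s) * g s ^ 2 else 0)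
              = ∑ s ∈ range N, g s ^ 2 * ∑ k ∈ range N, (if s < k - 1 then γ ^ (k - 1 - s) else 0) := by
                refine Finset.sum_congr rfl fun s _ => ?_
                rw [Finset.mul_sum]
                refine Finset.sum_congr rfl fun k _ => ?_
                by_cases h : s < k - 1
                · rw [if_pos h, if_pos h]; ring
                · rw [if_neg h, if_neg h]; ring
            _ ≤ ∑ s ∈ range N, g s ^ 2 * (γ / (1 - γ)) :=
                Finset.sum_le_sum fun s _ =>
                  mul_le_mul_of_nonneg_left (ddps_colGeoR hγ0 hγ1 N s) (sq_nonneg _)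
            _ = (γ / (1 - γ)) * Q := by rw [hQ, Finset.mul_sum]; exact Finset.sum_congr rfl fun k _ => by ring
      _ = (γ / (1 - γ))^2 * Q := by ring
  -- Step B : Q ≤ 4 a^2 Aq
  have stepB : Q ≤ 4 * a ^ 2 * Aq := by
    have h1 : Q ≤ 2 * a ^ 2 * Aq + 2 * c ^ 2 * ∑ k ∈ range N, (R k) ^ 2 := by
      have h2 : ∀ k, (g k) ^ 2 ≤ 2 * a ^ 2 * (al k) ^ 2 + 2 * c ^ 2 * (R k) ^ 2 := by
        intro k
        have hb := hrec k
        have : (g k) ^ 2 ≤ (a * al k + c * R k) ^ 2 := by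
          have h0 : 0 ≤ a * al k + c * R k :=
            add_nonneg (mul_nonneg ha (hal0 k)) (mul_nonneg hc (hR0 k))
          nlinarith [hg0 k]
        nlinarith [sq_nonneg (a * al k - c * R k)]
      calc Q ≤ ∑ k ∈ range N, (2 * a ^ 2 * (al k) ^ 2 + 2 * c ^ 2 * (R k) ^ 2) :=
            Finset.sum_le_sum fun k _ => h2 k
        _ = 2 * a ^ 2 * Aq + 2 * c ^ 2 * ∑ k ∈ range N, (R k) ^ 2 := by
            rw [Finset.sum_add_distrib, hAq, Finset.mul_sum, Finset.mul_sum]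
    have h3 : 2 * c ^ 2 * ((γ / (1 - γ))^2 * Q) ≤ (1/2) * Q := by
      have hcg : 0 ≤ c * γ := mul_nonneg hc hγ0.le
      have h4 : (c * γ) ^ 2 ≤ ((1 - γ)/2) ^ 2 := by nlinarith
      have h5 : 2 * c ^ 2 * (γ / (1 - γ))^2 ≤ 1/2 := by
        rw [div_pow, mul_div_assoc', div_le_iff₀ (by positivity : (0:ℝ) < (1 - γ)^2)]
        nlinarith
      nlinarith
    have h6 : 2 * c ^ 2 * ∑ k ∈ range N, (R k) ^ 2 ≤ (1/2) * Q := by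
      calc 2 * c ^ 2 * ∑ k ∈ range N, (R k) ^ 2
          ≤ 2 * c ^ 2 * ((γ / (1 - γ))^2 * Q) := by
            refine mul_le_mul_of_nonneg_left stepC (by positivity)
        _ ≤ (1/2) * Q := h3
    linarith
  calc ∑ k ∈ range N, g k * (∑ s ∈ range (k + 1), γ ^ (k - s) * g s)
      ≤ (1 / (1 - γ)) * Q := stepA
    _ ≤ (1 / (1 - γ)) * (4 * a ^ 2 * Aq) := by
        refine mul_le_mul_of_nonneg_left stepB (by positivity)
    _ = (4 * a ^ 2 / (1 - γ)) * Aq := by ring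

private lemma ddps_colsum {ι : Type*} [Fintype ι] [DecidableEq ι]
    (M : Matrix ι ι ℝ) (h : ∀ l, ∑ j, M j l = 1) :
    ∀ (m : ℕ) (l : ι), ∑ j, (M ^ m) j l = 1 := by
  intro m
  induction m with
  | zero => intro l; simp [Matrix.one_apply]
  | succ m ih =>
    intro l
    have : ∀ j, (M ^ (m + 1)) j l = ∑ t, (M ^ m) j t * M t l := by
      intro j; rw [pow_succ, Matrix.mul_apply]
    calc ∑ j, (M ^ (m + 1)) j l = ∑ j, ∑ t, (M ^ m) j t * M t l :=
          Finset.sum_congr rfl fun j _ => this j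
      _ = ∑ t, (∑ j, (M ^ m) j t) * M t l := by
          rw [Finset.sum_comm]
          exact Finset.sum_congr rfl fun t _ => (Finset.sum_mul _ _ _).symm
      _ = ∑ t, M t l := by simp [ih]
      _ = 1 := h l

private lemma ddps_closed_form {p : ℕ} {ι : Type*} [Fintype ι] [DecidableEq ι]
    (M : Matrix ι ι ℝ) (W Ev : ℕ → ι → EuclideanSpace ℝ (Fin p))
    (hW0 : ∀ j, W 0 j = 0)
    (hdyn : ∀ k j, W (k + 1) j = (∑ l, M j l • W k l) + Ev k j) :
    ∀ k j, W k j = ∑ s ∈ Finset.range k, ∑ l, (M ^ (k - 1 - s)) j l • Ev s l := by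
  intro k
  induction k with
  | zero => intro j; simp [hW0]
  | succ k ih =>
    intro j
    have e1 : ∀ l, M j l • (∑ s ∈ range k, ∑ m, (M ^ (k - 1 - s)) l m • Ev s m)
        = ∑ s ∈ range k, ∑ m, (M j l * (M ^ (k - 1 - s)) l m) • Ev s m := by
      intro l
      rw [Finset.smul_sum]
      refine Finset.sum_congr rfl fun s _ => ?_
      rw [Finset.smul_sum]
      exact Finset.sum_congr rfl fun m _ => smul_smul _ _ _
    have e2 : ∑ l, M j l • W k l = ∑ s ∈ range k, ∑ m, (M ^ (k - s)) j m • Ev s m := by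
      calc ∑ l, M j l • W k l
          = ∑ l, ∑ s ∈ range k, ∑ m, (M j l * (M ^ (k - 1 - s)) l m) • Ev s m := by
            refine Finset.sum_congr rfl fun l _ => ?_
            rw [ih l]; exact e1 l
        _ = ∑ s ∈ range k, ∑ l, ∑ m, (M j l * (M ^ (k - 1 - s)) l m) • Ev s m :=
            Finset.sum_comm
        _ = ∑ s ∈ range k, ∑ m, ∑ l, (M j l * (M ^ (k - 1 - s)) l m) • Ev s m :=
            Finset.sum_congr rfl fun s _ => Finset.sum_comm
        _ = ∑ s ∈ range k, ∑ m, (∑ l, M j l * (M ^ (k - 1 - s)) l m) • Ev s m :=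
            Finset.sum_congr rfl fun s _ => Finset.sum_congr rfl fun m _ =>
              (Finset.sum_smul).symm
        _ = ∑ s ∈ range k, ∑ m, (M ^ (k - s)) j m • Ev s m := by
            refine Finset.sum_congr rfl fun s hs => Finset.sum_congr rfl fun m _ => ?_
            rw [Finset.mem_range] at hs
            have he : k - 1 - s + 1 = k - s := by omega
            rw [← Matrix.mul_apply, ← pow_succ', he]
    calc W (k + 1) j = (∑ l, M j l • W k l) + Ev k j := hdyn k j
      _ = (∑ s ∈ range k, ∑ m, (M ^ (k - s)) j m • Ev s m) + Ev k j := by rw [e2]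
      _ = ∑ s ∈ range (k + 1), ∑ m, (M ^ (k - s)) j m • Ev s m := by
          rw [Finset.sum_range_succ]
          congr 1
          simp [Matrix.one_apply, ite_smul]
      _ = ∑ s ∈ range (k + 1), ∑ m, (M ^ (k + 1 - 1 - s)) j m • Ev s m := by
          simp only [Nat.add_sub_cancel]


theorem ddps_perturbation_consensus_sum
    {n p : ℕ} (hn : 1 ≤ n) (hp : 1 ≤ p)
    (f : Fin n → EuclideanSpace ℝ (Fin p) → ℝ)
    (hconv : ∀ i, ConvexOn ℝ Set.univ (f i))
    (B : ℝ) (hB : 0 < B)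
    (hsubB : ∀ (i : Fin n) (u s : EuclideanSpace ℝ (Fin p)),
      (∀ v, f i u + ⟪s, v - u⟫ ≤ f i v) → ‖s‖ ≤ B)
    (X : Set (EuclideanSpace ℝ (Fin p)))
    (hXne : X.Nonempty) (hXcl : IsClosed X) (hXcv : Convex ℝ X)
    (hX0 : (0 : EuclideanSpace ℝ (Fin p)) ∈ X)
    (P : EuclideanSpace ℝ (Fin p) → EuclideanSpace ℝ (Fin p))
    (hPmem : ∀ v, P v ∈ X)
    (hPproj : ∀ v w, w ∈ X → ‖P v - v‖ ≤ ‖w - v‖)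
    (A Bh : Matrix (Fin n) (Fin n) ℝ)
    (hAnn : ∀ i j, 0 ≤ A i j) (hArow : ∀ i, ∑ j, A i j = 1)
    (hBnn : ∀ i j, 0 ≤ Bh i j) (hBcol : ∀ j, ∑ i, Bh i j = 1)
    (ε : ℝ) (hε : 0 < ε)
    (α : ℕ → ℝ) (hαnn : ∀ k, 0 ≤ α k) (hαdec : ∀ k, α (k + 1) ≤ α k)
    (x y d : ℕ → Fin n → EuclideanSpace ℝ (Fin p))
    (hx0 : ∀ i, x 0 i = 0) (hy0 : ∀ i, y 0 i = 0)
    (hd : ∀ k i v, f i (x k i) + ⟪d k i, v - x k i⟫ ≤ f i v)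
    (hxupd : ∀ k i, x (k + 1) i = P (∑ j, A i j • x k j + ε • y k i - α k • d k i))
    (hyupd : ∀ k i, y (k + 1) i =
      x k i - ∑ j, A i j • x k j + (∑ j, Bh i j • y k j) - ε • y k i)
    (gv : ℕ → Fin n → EuclideanSpace ℝ (Fin p))
    (hgv : ∀ k i, gv k i = x (k + 1) i - ∑ j, A i j • x k j - ε • y k i)
    (g : ℕ → ℝ) (hg : ∀ k, g k = ∑ i, ‖gv k i‖)
    (zbar : ℕ → EuclideanSpace ℝ (Fin p))
    (hzbar : ∀ k, zbar k = (n : ℝ)⁻¹ • (∑ i, x k i + ∑ i, y k i))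
    (Γ γ : ℝ) (hΓ : 0 < Γ) (hγ0 : 0 < γ) (hγ1 : γ < 1)
    (hM : ∀ (k : ℕ) (i : Fin n ⊕ Fin n),
      ∑ j, |((Matrix.fromBlocks A (ε • (1 : Matrix (Fin n) (Fin n) ℝ))
          ((1 : Matrix (Fin n) (Fin n) ℝ) - A) (Bh - ε • (1 : Matrix (Fin n) (Fin n) ℝ))) ^ k
        - Matrix.fromBlocks (Matrix.of fun _ _ => (n : ℝ)⁻¹)
            (Matrix.of fun _ _ => (n : ℝ)⁻¹) 0 0 :
          Matrix (Fin n ⊕ Fin n) (Fin n ⊕ Fin n) ℝ) i j| ≤ Γ * γ ^ k)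
    (hεsmall : ε < (1 - γ) / (2 * n * Γ * γ))
    :
    ∃ F > 0, ∀ (i : Fin n) (K : ℕ),
      ∑ k ∈ Finset.range (K + 1), g k * ‖zbar (k + 1) - x (k + 1) i‖ ≤
        F * ∑ k ∈ Finset.range (K + 1), (α k) ^ 2 := by
  have hn' : (0:ℝ) < (n:ℝ) := by exact_mod_cast Nat.lt_of_lt_of_le Nat.zero_lt_one hn
  have hγs : (0:ℝ) < 1 - γ := by linarith
  set Mm : Matrix (Fin n ⊕ Fin n) (Fin n ⊕ Fin n) ℝ :=
    Matrix.fromBlocks A (ε • (1 : Matrix (Fin n) (Fin n) ℝ))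
      ((1 : Matrix (Fin n) (Fin n) ℝ) - A) (Bh - ε • (1 : Matrix (Fin n) (Fin n) ℝ)) with hMm
  set L : Matrix (Fin n ⊕ Fin n) (Fin n ⊕ Fin n) ℝ :=
    Matrix.fromBlocks (Matrix.of fun _ _ => (n : ℝ)⁻¹) (Matrix.of fun _ _ => (n : ℝ)⁻¹) 0 0
    with hL
  set W : ℕ → (Fin n ⊕ Fin n) → EuclideanSpace ℝ (Fin p) :=
    fun k => Sum.elim (x k) (y k) with hW
  set Ev : ℕ → (Fin n ⊕ Fin n) → EuclideanSpace ℝ (Fin p) :=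
    fun k => Sum.elim (gv k) (fun _ => 0) with hEv
  -- basic facts
  have hg0 : ∀ k, 0 ≤ g k := by
    intro k; rw [hg k]; exact Finset.sum_nonneg fun i _ => norm_nonneg _
  have hdB : ∀ k i, ‖d k i‖ ≤ B := fun k i => hsubB i (x k i) (d k i) (hd k i)
  have hxmem : ∀ k i, x k i ∈ X := by
    intro k
    induction k with
    | zero => intro i; rw [hx0 i]; exact hX0
    | succ k ih => intro i; rw [hxupd k i]; exact hPmem _
  -- bound on gv
  have hgvb : ∀ k i, ‖gv k i‖ ≤ 2 * B * α k + ε * ‖y k i‖ := by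
    intro k i
    set vv := ∑ j, A i j • x k j + ε • y k i - α k • d k i with hvv
    have h1 : gv k i = (P vv - vv) - α k • d k i := by
      rw [hgv k i, hxupd k i, hvv]; abel
    have hmem : (∑ j, A i j • x k j) ∈ X :=
      hXcv.sum_mem (fun j _ => hAnn i j) (hArow i) (fun j _ => hxmem k j)
    have h2 := hPproj vv _ hmem
    have h3 : (∑ j, A i j • x k j) - vv = α k • d k i - ε • y k i := by
      rw [hvv]; abel
    rw [h3] at h2
    have hnd : ‖α k • d k i‖ ≤ α k * B := by
      rw [norm_smul, Real.norm_eq_abs, abs_of_nonneg (hαnn k)]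
      exact mul_le_mul_of_nonneg_left (hdB k i) (hαnn k)
    have hny : ‖ε • y k i‖ = ε * ‖y k i‖ := by
      rw [norm_smul, Real.norm_eq_abs, abs_of_nonneg hε.le]
    rw [h1]
    calc ‖(P vv - vv) - α k • d k i‖ ≤ ‖P vv - vv‖ + ‖α k • d k i‖ := norm_sub_le _ _
      _ ≤ ‖α k • d k i - ε • y k i‖ + ‖α k • d k i‖ := by gcongr
      _ ≤ (‖α k • d k i‖ + ‖ε • y k i‖) + ‖α k • d k i‖ := by
          gcongr; exact norm_sub_le _ _
      _ ≤ (α k * B + ε * ‖y k i‖) + α k * B := by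
          rw [hny]; gcongr
      _ = 2 * B * α k + ε * ‖y k i‖ := by ring
  -- dynamics
  have hdyn : ∀ k (j : Fin n ⊕ Fin n), W (k + 1) j = (∑ l, Mm j l • W k l) + Ev k j := by
    intro k j
    rw [Fintype.sum_sum_type]
    cases j with
    | inl i =>
      simp only [hW, hEv, hMm, Sum.elim_inl, Sum.elim_inr,
        Matrix.fromBlocks_apply₁₁, Matrix.fromBlocks_apply₁₂,
        Matrix.smul_apply, Matrix.one_apply, smul_eq_mul, mul_ite, mul_one, mul_zero,
        ite_smul, zero_smul, Finset.sum_ite_eq, Finset.mem_univ, if_true]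
      rw [hgv k i]
      abel
    | inr i =>
      simp only [hW, hEv, hMm, Sum.elim_inl, Sum.elim_inr,
        Matrix.fromBlocks_apply₂₁, Matrix.fromBlocks_apply₂₂,
        Matrix.sub_apply, Matrix.smul_apply, Matrix.one_apply, smul_eq_mul,
        mul_ite, mul_one, mul_zero, sub_smul, ite_smul, zero_smul, one_smul,
        Finset.sum_sub_distrib, Finset.sum_ite_eq, Finset.mem_univ, if_true]
      rw [hyupd k i]
      abel
  have hW0 : ∀ j, W 0 j = 0 := by
    intro j; cases j with
    | inl i => simp [hW, hx0 i]
    | inr i => simp [hW, hy0 i]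
  have hcf := ddps_closed_form Mm W Ev hW0 hdyn
  -- column sums
  have hcol : ∀ l, ∑ j, Mm j l = 1 := by
    intro l
    rw [Fintype.sum_sum_type]
    cases l with
    | inl t =>
      simp only [hMm, Matrix.fromBlocks_apply₁₁, Matrix.fromBlocks_apply₂₁,
        Matrix.sub_apply, Matrix.one_apply, Finset.sum_sub_distrib,
        Finset.sum_ite_eq', Finset.mem_univ, if_true]
      ring
    | inr t =>
      simp only [hMm, Matrix.fromBlocks_apply₁₂, Matrix.fromBlocks_apply₂₂,
        Matrix.sub_apply, Matrix.smul_apply, Matrix.one_apply, smul_eq_mul,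
        mul_ite, mul_one, mul_zero, Finset.sum_sub_distrib,
        Finset.sum_ite_eq', Finset.mem_univ, if_true]
      rw [hBcol t]
      ring
  have hpowcol := ddps_colsum Mm hcol
  -- entry bounds
  have hent : ∀ (e : ℕ) (r : Fin n ⊕ Fin n) (l : Fin n ⊕ Fin n),
      |(Mm ^ e - L) r l| ≤ Γ * γ ^ e := fun e r l =>
    le_trans (Finset.single_le_sum (f := fun j => |(Mm ^ e - L) r j|)
      (fun j _ => abs_nonneg _) (Finset.mem_univ l)) (hM e r)
  -- sum of norms of Ev
  have hEvsum : ∀ s, ∑ l, ‖Ev s l‖ = g s := by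
    intro s
    rw [Fintype.sum_sum_type, hg s]
    simp [hEv]
  -- generic row bound
  have hbound : ∀ (e s : ℕ) (c : (Fin n ⊕ Fin n) → ℝ),
      (∀ l, |c l| ≤ Γ * γ ^ e) → ‖∑ l, c l • Ev s l‖ ≤ Γ * γ ^ e * g s := by
    intro e s c hc
    calc ‖∑ l, c l • Ev s l‖ ≤ ∑ l, ‖c l • Ev s l‖ := norm_sum_le _ _
      _ = ∑ l, |c l| * ‖Ev s l‖ := by
          refine Finset.sum_congr rfl fun l _ => ?_
          rw [norm_smul, Real.norm_eq_abs]
      _ ≤ ∑ l, (Γ * γ ^ e) * ‖Ev s l‖ :=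
          Finset.sum_le_sum fun l _ =>
            mul_le_mul_of_nonneg_right (hc l) (norm_nonneg _)
      _ = (Γ * γ ^ e) * ∑ l, ‖Ev s l‖ := (Finset.mul_sum _ _ _).symm
      _ = Γ * γ ^ e * g s := by rw [hEvsum s]
  -- zbar closed form
  have hzb : ∀ k, zbar k = ∑ s ∈ range k, (n:ℝ)⁻¹ • (∑ m, gv s m) := by
    intro k
    rw [hzbar k]
    have h1 : ∑ i, x k i + ∑ i, y k i = ∑ j, W k j := by
      rw [Fintype.sum_sum_type]; simp [hW]
    rw [h1]
    have h2 : ∑ j, W k j = ∑ s ∈ range k, ∑ m, gv s m := by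
      calc ∑ j, W k j
          = ∑ j, ∑ s ∈ range k, ∑ l, (Mm ^ (k - 1 - s)) j l • Ev s l :=
            Finset.sum_congr rfl fun j _ => hcf k j
        _ = ∑ s ∈ range k, ∑ l, (∑ j, (Mm ^ (k - 1 - s)) j l) • Ev s l := by
            rw [Finset.sum_comm]
            refine Finset.sum_congr rfl fun s _ => ?_
            rw [Finset.sum_comm]
            exact Finset.sum_congr rfl fun l _ => (Finset.sum_smul).symm
        _ = ∑ s ∈ range k, ∑ l, Ev s l := by
            refine Finset.sum_congr rfl fun s _ => Finset.sum_congr rfl fun l _ => ?_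
            rw [hpowcol (k - 1 - s) l, one_smul]
        _ = ∑ s ∈ range k, ∑ m, gv s m := by
            refine Finset.sum_congr rfl fun s _ => ?_
            rw [Fintype.sum_sum_type]
            simp [hEv]
    rw [h2, Finset.smul_sum]
  -- consensus bound
  have hcons : ∀ k (i : Fin n), ‖zbar k - x k i‖ ≤ ∑ s ∈ range k, Γ * γ ^ (k - 1 - s) * g s := by
    intro k i
    have hx : x k i = ∑ s ∈ range k, ∑ l, (Mm ^ (k - 1 - s)) (Sum.inl i) l • Ev s l := by
      have := hcf k (Sum.inl i)
      simpa [hW] using this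
    have hLrow : ∀ s, (n:ℝ)⁻¹ • (∑ m, gv s m) = ∑ l, L (Sum.inl i) l • Ev s l := by
      intro s
      rw [Fintype.sum_sum_type]
      simp [hL, hEv, Finset.smul_sum]
    have hdiff : zbar k - x k i
        = ∑ s ∈ range k, ∑ l, (L (Sum.inl i) l - (Mm ^ (k - 1 - s)) (Sum.inl i) l) • Ev s l := by
      rw [hzb k, hx, ← Finset.sum_sub_distrib]
      refine Finset.sum_congr rfl fun s _ => ?_
      rw [hLrow s, ← Finset.sum_sub_distrib]
      exact Finset.sum_congr rfl fun l _ => (sub_smul _ _ _).symm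
    rw [hdiff]
    refine le_trans (norm_sum_le _ _) (Finset.sum_le_sum fun s _ => ?_)
    refine hbound (k - 1 - s) s _ fun l => ?_
    rw [abs_sub_comm]
    have : (Mm ^ (k - 1 - s)) (Sum.inl i) l - L (Sum.inl i) l
        = (Mm ^ (k - 1 - s) - L) (Sum.inl i) l := (Matrix.sub_apply _ _ _ _).symm
    rw [this]
    exact hent _ _ _
  -- y bound
  have hybd : ∀ k (i : Fin n), ‖y k i‖ ≤ ∑ s ∈ range (k - 1), Γ * γ ^ (k - 1 - s) * g s := by
    intro k i
    match k with
    | 0 => simp [hy0 i]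
    | (k + 1) =>
      have hy' : y (k + 1) i = ∑ s ∈ range (k + 1), ∑ l, (Mm ^ (k - s)) (Sum.inr i) l • Ev s l := by
        have := hcf (k + 1) (Sum.inr i)
        simp only [Nat.add_sub_cancel] at this
        simpa [hW] using this
      have hlast : ∑ l, (Mm ^ (k - k)) (Sum.inr i) l • Ev k l = 0 := by
        rw [Nat.sub_self, pow_zero, Fintype.sum_sum_type]
        simp [hEv, Matrix.one_apply]
      rw [Finset.sum_range_succ, hlast, add_zero] at hy'
      rw [hy']
      have hgoal : ∑ s ∈ range (k + 1 - 1), Γ * γ ^ (k + 1 - 1 - s) * g s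
          = ∑ s ∈ range k, Γ * γ ^ (k - s) * g s := by
        simp only [Nat.add_sub_cancel]
      rw [hgoal]
      refine le_trans (norm_sum_le _ _) (Finset.sum_le_sum fun s _ => ?_)
      refine hbound (k - s) s _ fun l => ?_
      have hLz : L (Sum.inr i) l = 0 := by
        cases l <;> simp [hL]
      have : (Mm ^ (k - s)) (Sum.inr i) l = (Mm ^ (k - s) - L) (Sum.inr i) l := by
        rw [Matrix.sub_apply, hLz, sub_zero]
      rw [this]
      exact hent _ _ _
  -- recursion for g
  have hgrec : ∀ k, g k ≤ (2 * n * B) * α k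
      + (ε * n * Γ) * ∑ s ∈ range (k - 1), γ ^ (k - 1 - s) * g s := by
    intro k
    rw [hg k]
    calc ∑ i, ‖gv k i‖
        ≤ ∑ _i : Fin n, (2 * B * α k + ε * ∑ s ∈ range (k - 1), Γ * γ ^ (k - 1 - s) * g s) := by
          refine Finset.sum_le_sum fun i _ => ?_
          refine le_trans (hgvb k i) ?_
          gcongr
          exact hybd k i
      _ = (n : ℝ) * (2 * B * α k + ε * ∑ s ∈ range (k - 1), Γ * γ ^ (k - 1 - s) * g s) := by
          rw [Finset.sum_const, Finset.card_univ, Fintype.card_fin, nsmul_eq_mul]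
      _ = (2 * n * B) * α k + (ε * n * Γ) * ∑ s ∈ range (k - 1), γ ^ (k - 1 - s) * g s := by
          rw [mul_add]
          congr 1
          · ring
          · calc (n : ℝ) * (ε * ∑ s ∈ range (k - 1), Γ * γ ^ (k - 1 - s) * g s)
                = ∑ s ∈ range (k - 1), (n : ℝ) * (ε * (Γ * γ ^ (k - 1 - s) * g s)) := by
                  rw [Finset.mul_sum, Finset.mul_sum]
              _ = ∑ s ∈ range (k - 1), (ε * n * Γ) * (γ ^ (k - 1 - s) * g s) :=
                  Finset.sum_congr rfl fun s _ => by ring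
              _ = (ε * n * Γ) * ∑ s ∈ range (k - 1), γ ^ (k - 1 - s) * g s :=
                  (Finset.mul_sum _ _ _).symm
  -- small epsilon condition
  have hsmall : (ε * n * Γ) * γ ≤ (1 - γ) / 2 := by
    have h2 : (0:ℝ) < 2 * n * Γ * γ := by positivity
    have h3 := (lt_div_iff₀ h2).mp hεsmall
    nlinarith
  have ha0 : (0:ℝ) ≤ 2 * n * B := by positivity
  have hc0 : (0:ℝ) ≤ ε * n * Γ := by positivity
  have hseq := ddps_seq γ (2 * n * B) (ε * n * Γ) hγ0 hγ1 ha0 hc0 hsmall g α hg0 hαnn hgrec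
  refine ⟨Γ * (4 * (2 * n * B) ^ 2 / (1 - γ)), by positivity, ?_⟩
  intro i K
  calc ∑ k ∈ range (K + 1), g k * ‖zbar (k + 1) - x (k + 1) i‖
      ≤ ∑ k ∈ range (K + 1), g k * (∑ s ∈ range (k + 1), Γ * γ ^ (k - s) * g s) := by
        refine Finset.sum_le_sum fun k _ => ?_
        refine mul_le_mul_of_nonneg_left ?_ (hg0 k)
        have := hcons (k + 1) i
        simpa only [Nat.add_sub_cancel] using this
    _ = Γ * ∑ k ∈ range (K + 1), g k * (∑ s ∈ range (k + 1), γ ^ (k - s) * g s) := by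
        rw [Finset.mul_sum]
        refine Finset.sum_congr rfl fun k _ => ?_
        rw [Finset.mul_sum, Finset.mul_sum, Finset.mul_sum]
        refine Finset.sum_congr rfl fun s _ => ?_
        ring
    _ ≤ Γ * ((4 * (2 * n * B) ^ 2 / (1 - γ)) * ∑ k ∈ range (K + 1), (α k) ^ 2) :=
        mul_le_mul_of_nonneg_left (hseq K) hΓ.le
    _ = (Γ * (4 * (2 * n * B) ^ 2 / (1 - γ))) * ∑ k ∈ range (K + 1), (α k) ^ 2 := by ring
end

section
/- For every x* ∈ X* and every k ≥ 0, the D-DPS iterates satisfy (2α_k/n)(f(z̄^k) − f*) ≤ ‖z̄^k − x*‖² − ‖z̄^{k+1} − x*‖² + (1/n²)‖Σ_{i=1}^n g_i^k‖² + (4Bα_k/n) Σ_{i=1}^n ‖z̄^k − x_i^k‖ + (2/n) Σ_{i=1}^n ⟨z̄^k − x*, g_i^k + α_k d_i^k⟩. -/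
open Finset Filter
open scoped RealInnerProductSpace

/-- Existence of a subgradient for a convex function on a Euclidean space. -/
lemma exists_subgradient_euclidean {p : ℕ} (f : EuclideanSpace ℝ (Fin p) → ℝ)
    (hf : ConvexOn ℝ Set.univ f) (u : EuclideanSpace ℝ (Fin p)) :
    ∃ s : EuclideanSpace ℝ (Fin p), ∀ v, f u + ⟪s, v - u⟫ ≤ f v := by
  classical
  have hcont : Continuous f := by
    have := hf.continuousOn isOpen_univ
    rwa [continuousOn_univ] at this
  set epi : Set (EuclideanSpace ℝ (Fin p) × ℝ) := {q | f q.1 ≤ q.2} with hepi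
  have hepiconv : Convex ℝ epi := by
    have h := hf.convex_epigraph
    have heq : {q : EuclideanSpace ℝ (Fin p) × ℝ | q.1 ∈ Set.univ ∧ f q.1 ≤ q.2} = epi := by
      ext q; simp [hepi]
    rwa [heq] at h
  have hTconv : Convex ℝ (interior epi) := hepiconv.interior
  have hstrict : ∀ q : EuclideanSpace ℝ (Fin p) × ℝ, f q.1 < q.2 → q ∈ interior epi := by
    intro q hq
    have hopen : IsOpen {q : EuclideanSpace ℝ (Fin p) × ℝ | f q.1 < q.2} :=
      isOpen_lt (hcont.comp continuous_fst) continuous_snd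
    have hsubset : {q : EuclideanSpace ℝ (Fin p) × ℝ | f q.1 < q.2} ⊆ epi :=
      fun r hr => show f r.1 ≤ r.2 from le_of_lt hr
    exact interior_maximal hsubset hopen hq
  have hnot : (u, f u) ∉ interior epi := by
    intro h
    obtain ⟨ε, hε, hball⟩ := Metric.isOpen_iff.mp isOpen_interior _ h
    have hd2 : dist (f u - ε/2) (f u) = ε/2 := by
      rw [Real.dist_eq, abs_of_nonpos (by linarith)]; ring
    have hmem : ((u, f u - ε/2) : EuclideanSpace ℝ (Fin p) × ℝ)
        ∈ Metric.ball ((u, f u) : EuclideanSpace ℝ (Fin p) × ℝ) ε := by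
      rw [Metric.mem_ball, Prod.dist_eq, dist_self, hd2, max_eq_right (by linarith)]
      linarith
    have hin := interior_subset (hball hmem)
    simp only [hepi, Set.mem_setOf_eq] at hin
    linarith
  obtain ⟨φ, hφ⟩ := geometric_hahn_banach_point_open hTconv isOpen_interior hnot
  set r : ℝ := φ ((0 : EuclideanSpace ℝ (Fin p)), (1 : ℝ)) with hrdef
  have hdecomp : ∀ (v : EuclideanSpace ℝ (Fin p)) (t : ℝ), φ (v, t) = φ (v, 0) + t * r := by
    intro v t
    have h1 : ((v, t) : EuclideanSpace ℝ (Fin p) × ℝ)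
        = (v, (0:ℝ)) + t • ((0:EuclideanSpace ℝ (Fin p)), (1:ℝ)) := by
      simp [Prod.ext_iff]
    rw [h1, map_add, map_smul, smul_eq_mul]
  have hr : 0 < r := by
    have h1 : φ (u, f u) < φ (u, f u + 1) :=
      hφ _ (hstrict (u, f u + 1) (by simp [lt_add_one]))
    rw [hdecomp u (f u + 1), hdecomp u (f u)] at h1
    nlinarith
  have hkey : ∀ v : EuclideanSpace ℝ (Fin p), φ (u, 0) + f u * r ≤ φ (v, 0) + f v * r := by
    intro v
    refine le_of_forall_sub_le fun ε hε => ?_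
    have h2 := hφ (v, f v + ε / r) (hstrict _ (by simp; positivity))
    rw [hdecomp v (f v + ε / r), hdecomp u (f u)] at h2
    have h3 : (f v + ε / r) * r = f v * r + ε := by field_simp
    linarith
  set ψ : EuclideanSpace ℝ (Fin p) →L[ℝ] ℝ :=
    φ.comp (ContinuousLinearMap.inl ℝ (EuclideanSpace ℝ (Fin p)) ℝ) with hψdef
  have hψ : ∀ v : EuclideanSpace ℝ (Fin p), ψ v = φ (v, 0) := fun v => rfl
  set w : EuclideanSpace ℝ (Fin p) :=
    (InnerProductSpace.toDual ℝ (EuclideanSpace ℝ (Fin p))).symm ψ with hwdef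
  have hw : ∀ v : EuclideanSpace ℝ (Fin p), ⟪w, v⟫ = φ (v, 0) := by
    intro v
    rw [hwdef, InnerProductSpace.toDual_symm_apply]
    exact hψ v
  refine ⟨(-(r⁻¹)) • w, fun v => ?_⟩
  have h4 := hkey v
  have h5 : ⟪(-(r⁻¹)) • w, v - u⟫ = -(r⁻¹) * (φ (v,0) - φ (u,0)) := by
    rw [real_inner_smul_left, inner_sub_right, hw, hw]
  rw [h5]
  have h7 : (φ (u,0) - φ (v,0)) * r⁻¹ ≤ ((f v - f u) * r) * r⁻¹ :=
    mul_le_mul_of_nonneg_right (by linarith) (inv_nonneg.mpr hr.le)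
  rw [mul_assoc, mul_inv_cancel₀ hr.ne', mul_one] at h7
  nlinarith [h7]

theorem ddps_basic_optimality_inequality
    {n p : ℕ} (hn : 1 ≤ n) (hp : 1 ≤ p)
    (f : Fin n → EuclideanSpace ℝ (Fin p) → ℝ)
    (hconv : ∀ i, ConvexOn ℝ Set.univ (f i))
    (B : ℝ) (hB : 0 < B)
    (hsubB : ∀ (i : Fin n) (u s : EuclideanSpace ℝ (Fin p)),
      (∀ v, f i u + ⟪s, v - u⟫ ≤ f i v) → ‖s‖ ≤ B)
    (X : Set (EuclideanSpace ℝ (Fin p)))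
    (hXne : X.Nonempty) (hXcl : IsClosed X) (hXcv : Convex ℝ X)
    (hX0 : (0 : EuclideanSpace ℝ (Fin p)) ∈ X)
    (P : EuclideanSpace ℝ (Fin p) → EuclideanSpace ℝ (Fin p))
    (hPmem : ∀ v, P v ∈ X)
    (hPproj : ∀ v w, w ∈ X → ‖P v - v‖ ≤ ‖w - v‖)
    (A Bh : Matrix (Fin n) (Fin n) ℝ)
    (hAnn : ∀ i j, 0 ≤ A i j) (hArow : ∀ i, ∑ j, A i j = 1)
    (hBnn : ∀ i j, 0 ≤ Bh i j) (hBcol : ∀ j, ∑ i, Bh i j = 1)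
    (ε : ℝ) (hε : 0 < ε)
    (α : ℕ → ℝ) (hαnn : ∀ k, 0 ≤ α k) (hαdec : ∀ k, α (k + 1) ≤ α k)
    (x y d : ℕ → Fin n → EuclideanSpace ℝ (Fin p))
    (hx0 : ∀ i, x 0 i = 0) (hy0 : ∀ i, y 0 i = 0)
    (hd : ∀ k i v, f i (x k i) + ⟪d k i, v - x k i⟫ ≤ f i v)
    (hxupd : ∀ k i, x (k + 1) i = P (∑ j, A i j • x k j + ε • y k i - α k • d k i))
    (hyupd : ∀ k i, y (k + 1) i =
      x k i - ∑ j, A i j • x k j + (∑ j, Bh i j • y k j) - ε • y k i)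
    (gv : ℕ → Fin n → EuclideanSpace ℝ (Fin p))
    (hgv : ∀ k i, gv k i = x (k + 1) i - ∑ j, A i j • x k j - ε • y k i)
    (g : ℕ → ℝ) (hg : ∀ k, g k = ∑ i, ‖gv k i‖)
    (zbar : ℕ → EuclideanSpace ℝ (Fin p))
    (hzbar : ∀ k, zbar k = (n : ℝ)⁻¹ • (∑ i, x k i + ∑ i, y k i))
    (Γ γ : ℝ) (hΓ : 0 < Γ) (hγ0 : 0 < γ) (hγ1 : γ < 1)
    (hM : ∀ (k : ℕ) (i : Fin n ⊕ Fin n),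
      ∑ j, |((Matrix.fromBlocks A (ε • (1 : Matrix (Fin n) (Fin n) ℝ))
          ((1 : Matrix (Fin n) (Fin n) ℝ) - A) (Bh - ε • (1 : Matrix (Fin n) (Fin n) ℝ))) ^ k
        - Matrix.fromBlocks (Matrix.of fun _ _ => (n : ℝ)⁻¹)
            (Matrix.of fun _ _ => (n : ℝ)⁻¹) 0 0 :
          Matrix (Fin n ⊕ Fin n) (Fin n ⊕ Fin n) ℝ) i j| ≤ Γ * γ ^ k)
    (fstar : ℝ) (hfstar : IsGLB ((fun v => ∑ i, f i v) '' X) fstar)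
    (hXstar : ∃ xs ∈ X, ∑ i, f i xs = fstar)
    :
    ∀ xs ∈ X, (∑ i, f i xs) = fstar → ∀ k : ℕ,
      (2 * α k / n) * ((∑ i, f i (zbar k)) - fstar) ≤
        ‖zbar k - xs‖ ^ 2 - ‖zbar (k + 1) - xs‖ ^ 2 +
          (1 / (n : ℝ) ^ 2) * ‖∑ i, gv k i‖ ^ 2 +
          (4 * B * α k / n) * ∑ i, ‖zbar k - x k i‖ +
          (2 / n) * ∑ i, ⟪zbar k - xs, gv k i + α k • d k i⟫ := by
  intro xs hxs hfxs k
  have hnpos : (0:ℝ) < (n:ℝ) := by exact_mod_cast hn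
  -- Lipschitz-type bound from the subgradient norm bound
  have flip : ∀ (i : Fin n) (a b : EuclideanSpace ℝ (Fin p)),
      f i a - f i b ≤ B * ‖a - b‖ := by
    intro i a b
    obtain ⟨s, hs⟩ := exists_subgradient_euclidean (f i) (hconv i) a
    have hsB : ‖s‖ ≤ B := hsubB i a s hs
    have h1 := hs b
    have h2 : ⟪s, b - a⟫ = -⟪s, a - b⟫ := by
      rw [← inner_neg_right, neg_sub]
    have h3 : ⟪s, a - b⟫ ≤ ‖s‖ * ‖a - b‖ := real_inner_le_norm s (a - b)
    have h4 : ‖s‖ * ‖a - b‖ ≤ B * ‖a - b‖ :=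
      mul_le_mul_of_nonneg_right hsB (norm_nonneg _)
    linarith
  -- recursion for zbar
  have hz : zbar (k+1) = zbar k + (n:ℝ)⁻¹ • ∑ i, gv k i := by
    have hx' : ∀ i, x (k+1) i = gv k i + ((∑ j, A i j • x k j) + ε • y k i) := by
      intro i; rw [hgv]; abel
    have h1 : ∑ i, (∑ j, Bh i j • y k j) = ∑ j, y k j := by
      rw [Finset.sum_comm]
      refine Finset.sum_congr rfl fun j _ => ?_
      rw [← Finset.sum_smul, hBcol j, one_smul]
    have hsum : ∑ i, x (k+1) i + ∑ i, y (k+1) i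
        = (∑ i, x k i + ∑ i, y k i) + ∑ i, gv k i := by
      simp only [hx', hyupd k, Finset.sum_add_distrib, Finset.sum_sub_distrib]
      rw [h1]; abel
    rw [hzbar, hzbar, hsum, smul_add]
  -- expansion of the squared norm
  have e1 : ‖zbar (k+1) - xs‖ ^ 2 = ‖zbar k - xs‖ ^ 2
      + 2 * ((n:ℝ)⁻¹ * ⟪zbar k - xs, ∑ i, gv k i⟫)
      + ((n:ℝ)⁻¹)^2 * ‖∑ i, gv k i‖ ^ 2 := by
    have hzk : zbar (k+1) - xs = (zbar k - xs) + (n:ℝ)⁻¹ • ∑ i, gv k i := by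
      rw [hz]; abel
    rw [hzk, norm_add_sq_real, real_inner_smul_right, norm_smul]
    rw [Real.norm_eq_abs, abs_of_nonneg (inv_nonneg.mpr hnpos.le), mul_pow]
  -- expansion of the inner-product sum
  have e2 : ∑ i, ⟪zbar k - xs, gv k i + α k • d k i⟫
      = ⟪zbar k - xs, ∑ i, gv k i⟫ + α k * ∑ i, ⟪zbar k - xs, d k i⟫ := by
    simp only [inner_add_right, real_inner_smul_right, Finset.sum_add_distrib,
      inner_sum, Finset.mul_sum]
  -- per-agent inequality
  have key : ∀ i : Fin n, α k * (f i (zbar k) - f i xs)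
      ≤ α k * (2 * B * ‖zbar k - x k i‖ + ⟪zbar k - xs, d k i⟫) := by
    intro i
    refine mul_le_mul_of_nonneg_left ?_ (hαnn k)
    have hdB : ‖d k i‖ ≤ B := hsubB i _ _ (hd k i)
    have lipi : f i (zbar k) - f i (x k i) ≤ B * ‖zbar k - x k i‖ := flip i _ _
    have hsub := hd k i xs
    have h2 : ⟪d k i, xs - x k i⟫ = -⟪d k i, x k i - xs⟫ := by
      rw [← inner_neg_right, neg_sub]
    have hsplit : ⟪d k i, x k i - xs⟫
        = ⟪d k i, x k i - zbar k⟫ + ⟪d k i, zbar k - xs⟫ := by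
      rw [← inner_add_right]; congr 1; abel
    have hbnd : ⟪d k i, x k i - zbar k⟫ ≤ B * ‖zbar k - x k i‖ := by
      calc ⟪d k i, x k i - zbar k⟫ ≤ ‖d k i‖ * ‖x k i - zbar k‖ :=
            real_inner_le_norm _ _
        _ = ‖d k i‖ * ‖zbar k - x k i‖ := by rw [norm_sub_rev]
        _ ≤ B * ‖zbar k - x k i‖ :=
            mul_le_mul_of_nonneg_right hdB (norm_nonneg _)
    have hcomm : ⟪zbar k - xs, d k i⟫ = ⟪d k i, zbar k - xs⟫ := real_inner_comm _ _
    linarith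
  -- summed inequality
  have e3 : α k * ((∑ i, f i (zbar k)) - ∑ i, f i xs)
      ≤ α k * (2 * B * (∑ i, ‖zbar k - x k i‖) + ∑ i, ⟪zbar k - xs, d k i⟫) := by
    calc α k * ((∑ i, f i (zbar k)) - ∑ i, f i xs)
        = ∑ i, α k * (f i (zbar k) - f i xs) := by
          rw [← Finset.sum_sub_distrib, Finset.mul_sum]
      _ ≤ ∑ i, α k * (2 * B * ‖zbar k - x k i‖ + ⟪zbar k - xs, d k i⟫) :=
          Finset.sum_le_sum fun i _ => key i
      _ = α k * (2 * B * (∑ i, ‖zbar k - x k i‖) + ∑ i, ⟪zbar k - xs, d k i⟫) := by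
          simp only [mul_add, Finset.mul_sum, Finset.sum_add_distrib]
  rw [← hfxs, e1, e2]
  calc (2 * α k / n) * ((∑ i, f i (zbar k)) - ∑ i, f i xs)
      = (2 / (n:ℝ)) * (α k * ((∑ i, f i (zbar k)) - ∑ i, f i xs)) := by ring
    _ ≤ (2 / (n:ℝ)) * (α k * (2 * B * (∑ i, ‖zbar k - x k i‖)
          + ∑ i, ⟪zbar k - xs, d k i⟫)) := by
        apply mul_le_mul_of_nonneg_left e3 (by positivity)
    _ = ‖zbar k - xs‖ ^ 2 - (‖zbar k - xs‖ ^ 2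
          + 2 * ((n:ℝ)⁻¹ * ⟪zbar k - xs, ∑ i, gv k i⟫)
          + ((n:ℝ)⁻¹)^2 * ‖∑ i, gv k i‖ ^ 2)
        + (1 / (n : ℝ) ^ 2) * ‖∑ i, gv k i‖ ^ 2
        + (4 * B * α k / n) * ∑ i, ‖zbar k - x k i‖
        + (2 / n) * (⟪zbar k - xs, ∑ i, gv k i⟫
            + α k * ∑ i, ⟪zbar k - xs, d k i⟫) := by ring
end

section
/- Suppose in addition that ε < (1−γ)/(2nΓγ), Σ_{k=0}^∞ α_k = ∞ and Σ_{k=0}^∞ α_k² < ∞. Then Σ_{k=0}^∞ α_k (f(z̄^k) − f*) < ∞. -/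
open Finset Filter
open scoped RealInnerProductSpace

lemma ddps_exists_subgrad {p : ℕ} (φ : EuclideanSpace ℝ (Fin p) → ℝ)
    (hc : ConvexOn ℝ Set.univ φ) (u : EuclideanSpace ℝ (Fin p)) :
    ∃ s, ∀ v, φ u + ⟪s, v - u⟫ ≤ φ v := by
  have hcont : Continuous φ := by
    exact continuousOn_univ.1 (hc.continuousOn isOpen_univ)
  set S : Set (EuclideanSpace ℝ (Fin p) × ℝ) := {q | φ q.1 < q.2} with hS
  have hSconv : Convex ℝ S := by
    intro a ha b hb t r ht hr htr
    simp only [hS, Set.mem_setOf_eq] at ha hb ⊢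
    have h2 := hc.2 (Set.mem_univ a.1) (Set.mem_univ b.1) ht hr htr
    simp only [smul_eq_mul] at h2
    calc φ (t • a + r • b).1 = φ (t • a.1 + r • b.1) := rfl
    _ ≤ t * φ a.1 + r * φ b.1 := h2
    _ < t * a.2 + r * b.2 := by
        rcases eq_or_lt_of_le ht with h | h
        · rcases eq_or_lt_of_le hr with h' | h'
          · exfalso; rw [← h, ← h'] at htr; simp at htr
          · rw [← h]; simpa using mul_lt_mul_of_pos_left hb h'
        · rcases eq_or_lt_of_le hr with h' | h'
          · rw [← h']; simpa using mul_lt_mul_of_pos_left ha h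
          · exact add_lt_add (mul_lt_mul_of_pos_left ha h) (mul_lt_mul_of_pos_left hb h')
    _ = t * a.2 + r * b.2 := rfl
  have hSopen : IsOpen S := isOpen_lt (hcont.comp continuous_fst) continuous_snd
  have hnot : (u, φ u) ∉ S := by simp [hS]
  obtain ⟨L, hL⟩ := geometric_hahn_banach_open_point hSconv hSopen hnot
  set c : ℝ := L (0, 1) with hcdef
  have hdec : ∀ (z : EuclideanSpace ℝ (Fin p)) (t : ℝ),
      L (z, t) = L (z, 0) + t * c := by
    intro z t
    have h : ((z, t) : EuclideanSpace ℝ (Fin p) × ℝ)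
        = (z, 0) + t • ((0 : EuclideanSpace ℝ (Fin p)), (1 : ℝ)) := by
      simp [Prod.ext_iff]
    rw [h, map_add, map_smul, smul_eq_mul, hcdef]
  have hc0 : c < 0 := by
    have h := hL (u, φ u + 1) (by simp [hS])
    rw [hdec u (φ u + 1), hdec u (φ u)] at h
    nlinarith
  have hkey : ∀ v, L (v, 0) + c * φ v ≤ L (u, 0) + c * φ u := by
    intro v
    refine le_of_forall_pos_lt_add (fun e he => ?_)
    have hδ : 0 < e / (-c) := div_pos he (by linarith)
    have h := hL (v, φ v + e / (-c)) (by simp [hS]; linarith)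
    rw [hdec v (φ v + e / (-c)), hdec u (φ u)] at h
    have hcc : (e / (-c)) * c = -e := by
      rw [show (e / (-c)) * c = -((e / (-c)) * (-c)) by ring,
        div_mul_cancel₀ _ (by linarith : (-c) ≠ 0)]
    nlinarith
  set ψ : EuclideanSpace ℝ (Fin p) →L[ℝ] ℝ :=
    L.comp (ContinuousLinearMap.inl ℝ (EuclideanSpace ℝ (Fin p)) ℝ) with hψ
  have hψapp : ∀ z, ψ z = L (z, 0) := by intro z; simp [hψ]
  set w : EuclideanSpace ℝ (Fin p) :=
    (InnerProductSpace.toDual ℝ (EuclideanSpace ℝ (Fin p))).symm ψ with hw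
  have hwapp : ∀ z : EuclideanSpace ℝ (Fin p), ⟪w, z⟫ = L (z, 0) := by
    intro z
    rw [hw, InnerProductSpace.toDual_symm_apply, hψapp]
  refine ⟨(-c)⁻¹ • w, fun v => ?_⟩
  have h2 := hkey v
  have hinner : ⟪(-c)⁻¹ • w, v - u⟫ = (-c)⁻¹ * (L (v, 0) - L (u, 0)) := by
    rw [real_inner_smul_left, inner_sub_right, hwapp, hwapp]
  rw [hinner]
  have hc' : (0:ℝ) < -c := by linarith
  have h3 : (-c)⁻¹ * (L (v, 0) - L (u, 0)) ≤ φ v - φ u := by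
    rw [inv_mul_eq_div, div_le_iff₀ hc']
    nlinarith
  linarith

lemma ddps_lip {p : ℕ} (φ : EuclideanSpace ℝ (Fin p) → ℝ)
    (hc : ConvexOn ℝ Set.univ φ) (B : ℝ)
    (hs : ∀ u s : EuclideanSpace ℝ (Fin p),
      (∀ v, φ u + ⟪s, v - u⟫ ≤ φ v) → ‖s‖ ≤ B) :
    ∀ u v, φ u ≤ φ v + B * ‖u - v‖ := by
  intro u v
  obtain ⟨s, hsub⟩ := ddps_exists_subgrad φ hc u
  have hB := hs u s hsub
  have h0 := hsub v
  have h2 : ⟪s, v - u⟫ = -⟪s, u - v⟫ := by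
    rw [← inner_neg_right]; congr 1; abel
  have h3 : ⟪s, u - v⟫ ≤ ‖s‖ * ‖u - v‖ := real_inner_le_norm s (u - v)
  have h4 : ‖s‖ * ‖u - v‖ ≤ B * ‖u - v‖ :=
    mul_le_mul_of_nonneg_right hB (norm_nonneg _)
  rw [h2] at h0
  linarith

set_option maxHeartbeats 1000000 in
lemma ddps_proj_inner {p : ℕ} (X : Set (EuclideanSpace ℝ (Fin p)))
    (hXne : X.Nonempty) (hXcv : Convex ℝ X)
    (P : EuclideanSpace ℝ (Fin p) → EuclideanSpace ℝ (Fin p))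
    (hPmem : ∀ v, P v ∈ X)
    (hPproj : ∀ v w, w ∈ X → ‖P v - v‖ ≤ ‖w - v‖) :
    ∀ v, ∀ w ∈ X, ⟪v - P v, w - P v⟫ ≤ 0 := by
  intro v
  have : Nonempty X := hXne.to_subtype
  have hbdd : BddBelow (Set.range fun w : X => ‖v - (w : EuclideanSpace ℝ (Fin p))‖) :=
    ⟨0, fun _ ⟨_, h⟩ => h ▸ norm_nonneg _⟩
  have hinf : ‖v - P v‖ = ⨅ w : X, ‖v - w‖ := by
    apply le_antisymm
    · apply le_ciInf
      intro w
      rw [norm_sub_rev v (P v), norm_sub_rev v (w : EuclideanSpace ℝ (Fin p))]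
      exact hPproj v w.1 w.2
    · exact ciInf_le hbdd ⟨P v, hPmem v⟩
  exact (norm_eq_iInf_iff_real_inner_le_zero hXcv (hPmem v)).1 hinf

lemma ddps_sq_sum (β : ℝ) (hβ0 : 0 ≤ β) (hβ1 : β < 1) (v w : ℕ → ℝ)
    (hv : ∀ k, 0 ≤ v k) (hw : ∀ k, 0 ≤ w k)
    (hrec : ∀ k, v (k + 1) ≤ β * v k + w k) (T : ℝ)
    (hT : ∀ K, ∑ k ∈ range K, (w k) ^ 2 ≤ T) :
    ∀ K, ∑ k ∈ range K, (v k) ^ 2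
      ≤ ((v 0) ^ 2 + (1 + β ^ 2) / (1 - β ^ 2) * T) * (2 / (1 - β ^ 2)) := by
  have hb2 : 0 < 1 - β ^ 2 := by nlinarith
  have hTnn : 0 ≤ T := le_trans (by simp) (hT 0)
  have hstep : ∀ k, (v (k + 1)) ^ 2
      ≤ (1 + β ^ 2) / 2 * (v k) ^ 2 + (1 + β ^ 2) / (1 - β ^ 2) * (w k) ^ 2 := by
    intro k
    have h1 := hrec k
    have h2 := hv k
    have h3 := hw k
    have h4 := hv (k + 1)
    have h5 : (v (k + 1)) ^ 2 ≤ (β * v k + w k) ^ 2 := by nlinarith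
    have hfs : (1 - β ^ 2) * ((1 + β ^ 2) / (1 - β ^ 2) * (w k) ^ 2)
        = (1 + β ^ 2) * (w k) ^ 2 := by field_simp
    have key : ((1 - β ^ 2) * v k - 2 * β * w k) ^ 2 ≥ 0 := sq_nonneg _
    have h7 : (β * v k + w k) ^ 2
        ≤ (1 + β ^ 2) / 2 * (v k) ^ 2 + (1 + β ^ 2) / (1 - β ^ 2) * (w k) ^ 2 := by
      rw [← mul_le_mul_iff_right₀ hb2, mul_add, hfs]
      nlinarith
    linarith
  intro K
  have hSmono : ∀ K, ∑ k ∈ range K, (v k) ^ 2 ≤ ∑ k ∈ range (K + 1), (v k) ^ 2 := by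
    intro K
    rw [sum_range_succ]
    nlinarith [sq_nonneg (v K)]
  have hmain : ∑ k ∈ range K, (v k) ^ 2
      ≤ (v 0) ^ 2 + (1 + β ^ 2) / 2 * (∑ k ∈ range K, (v k) ^ 2)
        + (1 + β ^ 2) / (1 - β ^ 2) * T := by
    cases K with
    | zero =>
      simp
      positivity
    | succ K =>
      have h3 : ∑ k ∈ range K, (v k) ^ 2 ≤ ∑ k ∈ range (K + 1), (v k) ^ 2 := hSmono K
      rw [Finset.sum_range_succ'] at h3 ⊢
      have h1 : ∑ k ∈ range K, (v (k + 1)) ^ 2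
          ≤ (1 + β ^ 2) / 2 * (∑ k ∈ range K, (v k) ^ 2)
            + (1 + β ^ 2) / (1 - β ^ 2) * (∑ k ∈ range K, (w k) ^ 2) := by
        rw [mul_sum, mul_sum, ← sum_add_distrib]
        exact sum_le_sum fun k _ => hstep k
      have h2 : ∑ k ∈ range K, (w k) ^ 2 ≤ T := hT K
      have h4 : (0:ℝ) ≤ (1 + β ^ 2) / 2 := by positivity
      have h5 : (0:ℝ) ≤ (1 + β ^ 2) / (1 - β ^ 2) := by positivity
      have h6 := mul_le_mul_of_nonneg_left h3 h4
      have h7 := mul_le_mul_of_nonneg_left h2 h5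
      linarith
  have hpos : (0:ℝ) < 1 - (1 + β ^ 2) / 2 := by nlinarith
  have hfin : ∑ k ∈ range K, (v k) ^ 2
      ≤ ((v 0) ^ 2 + (1 + β ^ 2) / (1 - β ^ 2) * T) / (1 - (1 + β ^ 2) / 2) := by
    rw [le_div_iff₀' hpos]
    nlinarith
  calc ∑ k ∈ range K, (v k) ^ 2
      ≤ ((v 0) ^ 2 + (1 + β ^ 2) / (1 - β ^ 2) * T) / (1 - (1 + β ^ 2) / 2) := hfin
    _ = ((v 0) ^ 2 + (1 + β ^ 2) / (1 - β ^ 2) * T) * (2 / (1 - β ^ 2)) := by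
        rw [show (1:ℝ) - (1 + β ^ 2) / 2 = (1 - β ^ 2) / 2 by ring,
          div_div_eq_mul_div, mul_div_assoc]

set_option maxHeartbeats 8000000 in
theorem ddps_weighted_objective_sum_finite
    {n p : ℕ} (hn : 1 ≤ n) (hp : 1 ≤ p)
    (f : Fin n → EuclideanSpace ℝ (Fin p) → ℝ)
    (hconv : ∀ i, ConvexOn ℝ Set.univ (f i))
    (B : ℝ) (hB : 0 < B)
    (hsubB : ∀ (i : Fin n) (u s : EuclideanSpace ℝ (Fin p)),
      (∀ v, f i u + ⟪s, v - u⟫ ≤ f i v) → ‖s‖ ≤ B)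
    (X : Set (EuclideanSpace ℝ (Fin p)))
    (hXne : X.Nonempty) (hXcl : IsClosed X) (hXcv : Convex ℝ X)
    (hX0 : (0 : EuclideanSpace ℝ (Fin p)) ∈ X)
    (P : EuclideanSpace ℝ (Fin p) → EuclideanSpace ℝ (Fin p))
    (hPmem : ∀ v, P v ∈ X)
    (hPproj : ∀ v w, w ∈ X → ‖P v - v‖ ≤ ‖w - v‖)
    (A Bh : Matrix (Fin n) (Fin n) ℝ)
    (hAnn : ∀ i j, 0 ≤ A i j) (hArow : ∀ i, ∑ j, A i j = 1)
    (hBnn : ∀ i j, 0 ≤ Bh i j) (hBcol : ∀ j, ∑ i, Bh i j = 1)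
    (ε : ℝ) (hε : 0 < ε)
    (α : ℕ → ℝ) (hαnn : ∀ k, 0 ≤ α k) (hαdec : ∀ k, α (k + 1) ≤ α k)
    (x y d : ℕ → Fin n → EuclideanSpace ℝ (Fin p))
    (hx0 : ∀ i, x 0 i = 0) (hy0 : ∀ i, y 0 i = 0)
    (hd : ∀ k i v, f i (x k i) + ⟪d k i, v - x k i⟫ ≤ f i v)
    (hxupd : ∀ k i, x (k + 1) i = P (∑ j, A i j • x k j + ε • y k i - α k • d k i))
    (hyupd : ∀ k i, y (k + 1) i =
      x k i - ∑ j, A i j • x k j + (∑ j, Bh i j • y k j) - ε • y k i)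
    (gv : ℕ → Fin n → EuclideanSpace ℝ (Fin p))
    (hgv : ∀ k i, gv k i = x (k + 1) i - ∑ j, A i j • x k j - ε • y k i)
    (g : ℕ → ℝ) (hg : ∀ k, g k = ∑ i, ‖gv k i‖)
    (zbar : ℕ → EuclideanSpace ℝ (Fin p))
    (hzbar : ∀ k, zbar k = (n : ℝ)⁻¹ • (∑ i, x k i + ∑ i, y k i))
    (Γ γ : ℝ) (hΓ : 0 < Γ) (hγ0 : 0 < γ) (hγ1 : γ < 1)
    (hM : ∀ (k : ℕ) (i : Fin n ⊕ Fin n),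
      ∑ j, |((Matrix.fromBlocks A (ε • (1 : Matrix (Fin n) (Fin n) ℝ))
          ((1 : Matrix (Fin n) (Fin n) ℝ) - A) (Bh - ε • (1 : Matrix (Fin n) (Fin n) ℝ))) ^ k
        - Matrix.fromBlocks (Matrix.of fun _ _ => (n : ℝ)⁻¹)
            (Matrix.of fun _ _ => (n : ℝ)⁻¹) 0 0 :
          Matrix (Fin n ⊕ Fin n) (Fin n ⊕ Fin n) ℝ) i j| ≤ Γ * γ ^ k)
    (fstar : ℝ) (hfstar : IsGLB ((fun v => ∑ i, f i v) '' X) fstar)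
    (hXstar : ∃ xs ∈ X, ∑ i, f i xs = fstar)
    (hεsmall : ε < (1 - γ) / (2 * n * Γ * γ))
    (hαdiv : Tendsto (fun K => ∑ k ∈ Finset.range K, α k) atTop atTop)
    (hα2 : Summable fun k => (α k) ^ 2)
    :
    ∃ S : ℝ, ∀ K : ℕ,
      ∑ k ∈ Finset.range (K + 1), α k * ((∑ i, f i (zbar k)) - fstar) ≤ S := by
  classical
  obtain ⟨xs, hxsX, hxsf⟩ := hXstar
  have hn' : (0:ℝ) < n := by exact_mod_cast Nat.lt_of_lt_of_le Nat.zero_lt_one hn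
  have hn1 : (1:ℝ) ≤ n := by exact_mod_cast hn
  -- the stacked linear system
  set M : Matrix (Fin n ⊕ Fin n) (Fin n ⊕ Fin n) ℝ :=
    Matrix.fromBlocks A (ε • 1) (1 - A) (Bh - ε • 1) with hMdef
  set Mlim : Matrix (Fin n ⊕ Fin n) (Fin n ⊕ Fin n) ℝ :=
    Matrix.fromBlocks (Matrix.of fun _ _ => (n : ℝ)⁻¹)
      (Matrix.of fun _ _ => (n : ℝ)⁻¹) 0 0 with hLdef
  set u : ℕ → (Fin n ⊕ Fin n) → EuclideanSpace ℝ (Fin p) :=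
    fun k => Sum.elim (x k) (y k) with hudef
  set G : ℕ → (Fin n ⊕ Fin n) → EuclideanSpace ℝ (Fin p) :=
    fun k => Sum.elim (gv k) (fun _ => 0) with hGdef
  have hone : ∀ (N : ℕ) (v : Fin N → EuclideanSpace ℝ (Fin p)) (i : Fin N),
      (∑ j, ((1 : Matrix (Fin N) (Fin N) ℝ) i j) • v j) = v i := by
    intro N v i
    rw [Finset.sum_eq_single i]
    · simp [Matrix.one_apply]
    · intro b _ hb
      simp [Matrix.one_apply, (Ne.symm hb)]
    · simp
  have honeS : ∀ (v : (Fin n ⊕ Fin n) → EuclideanSpace ℝ (Fin p)) (i : Fin n ⊕ Fin n),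
      (∑ j, ((1 : Matrix (Fin n ⊕ Fin n) (Fin n ⊕ Fin n) ℝ) i j) • v j) = v i := by
    intro v i
    rw [Finset.sum_eq_single i]
    · simp [Matrix.one_apply]
    · intro b _ hb
      simp [Matrix.one_apply, (Ne.symm hb)]
    · simp
  have hstep : ∀ k i, u (k + 1) i = (∑ j, M i j • u k j) + G k i := by
    intro k i
    have hsum : ∀ (c : (Fin n ⊕ Fin n) → ℝ),
        (∑ j, c j • u k j)
          = ∑ j : Fin n, c (Sum.inl j) • x k j + ∑ j : Fin n, c (Sum.inr j) • y k j := by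
      intro c
      rw [Fintype.sum_sum_type]
      simp [hudef]
    cases i with
    | inl i =>
      rw [hsum]
      simp only [hMdef, Matrix.fromBlocks_apply₁₁, Matrix.fromBlocks_apply₁₂,
        Matrix.smul_apply, smul_eq_mul]
      have h2 : ∑ j : Fin n, (ε * (1 : Matrix (Fin n) (Fin n) ℝ) i j) • y k j
          = ε • y k i := by
        rw [show (fun j => (ε * (1 : Matrix (Fin n) (Fin n) ℝ) i j) • y k j)
            = fun j => ε • (((1 : Matrix (Fin n) (Fin n) ℝ) i j) • y k j) by
          funext j; rw [mul_smul]]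
        rw [← Finset.smul_sum, hone n (y k) i]
      rw [h2]
      simp only [hudef, hGdef, Sum.elim_inl]
      rw [hgv k i]
      abel
    | inr i =>
      rw [hsum]
      simp only [hMdef, Matrix.fromBlocks_apply₂₁, Matrix.fromBlocks_apply₂₂,
        Matrix.sub_apply, Matrix.smul_apply, smul_eq_mul]
      have h1 : ∑ j : Fin n, (((1 : Matrix (Fin n) (Fin n) ℝ) i j) - A i j) • x k j
          = x k i - ∑ j, A i j • x k j := by
        rw [show (fun j => (((1 : Matrix (Fin n) (Fin n) ℝ) i j) - A i j) • x k j)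
            = fun j => ((1 : Matrix (Fin n) (Fin n) ℝ) i j) • x k j - A i j • x k j by
          funext j; rw [sub_smul]]
        rw [Finset.sum_sub_distrib, hone n (x k) i]
      have h2 : ∑ j : Fin n, (Bh i j - ε * (1 : Matrix (Fin n) (Fin n) ℝ) i j) • y k j
          = (∑ j, Bh i j • y k j) - ε • y k i := by
        rw [show (fun j => (Bh i j - ε * (1 : Matrix (Fin n) (Fin n) ℝ) i j) • y k j)
            = fun j => Bh i j • y k j - ε • (((1 : Matrix (Fin n) (Fin n) ℝ) i j) • y k j) by
          funext j; rw [sub_smul, mul_smul]]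
        rw [Finset.sum_sub_distrib, ← Finset.smul_sum, hone n (y k) i]
      rw [h1, h2]
      simp only [hudef, hGdef, Sum.elim_inr]
      rw [hyupd k i]
      abel
  have hrepr : ∀ k i, u k i
      = ∑ s ∈ range k, ∑ j, ((M ^ (k - 1 - s)) i j) • G s j := by
    intro k
    induction k with
    | zero => intro i; cases i <;> simp [hudef, hx0, hy0]
    | succ k ih =>
      intro i
      rw [hstep k i]
      have h1 : (∑ j, M i j • u k j)
          = ∑ s ∈ range k, ∑ l, ((M ^ (k - s)) i l) • G s l := by
        calc (∑ j, M i j • u k j)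
            = ∑ j, M i j • ∑ s ∈ range k, ∑ l, ((M ^ (k - 1 - s)) j l) • G s l := by
              apply Finset.sum_congr rfl; intro j _; rw [ih j]
          _ = ∑ j, ∑ s ∈ range k, ∑ l, (M i j * (M ^ (k - 1 - s)) j l) • G s l := by
              apply Finset.sum_congr rfl; intro j _
              rw [Finset.smul_sum]
              apply Finset.sum_congr rfl; intro s _
              rw [Finset.smul_sum]
              apply Finset.sum_congr rfl; intro l _
              rw [smul_smul]
          _ = ∑ s ∈ range k, ∑ l, ∑ j, (M i j * (M ^ (k - 1 - s)) j l) • G s l := by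
              rw [Finset.sum_comm]
              apply Finset.sum_congr rfl; intro s _
              rw [Finset.sum_comm]
          _ = ∑ s ∈ range k, ∑ l, ((M ^ (k - s)) i l) • G s l := by
              apply Finset.sum_congr rfl; intro s hs
              apply Finset.sum_congr rfl; intro l _
              rw [← Finset.sum_smul]
              congr 1
              have hks : k - s = (k - 1 - s) + 1 := by
                rw [Finset.mem_range] at hs; omega
              rw [hks, pow_succ', Matrix.mul_apply]
      rw [h1, Finset.sum_range_succ]
      simp only [Nat.add_sub_cancel, Nat.sub_self, pow_zero]
      rw [honeS (G k) i]
  have honecol : ∀ (l : Fin n), ∑ j : Fin n, (1 : Matrix (Fin n) (Fin n) ℝ) j l = 1 := by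
    intro l
    rw [Finset.sum_eq_single l]
    · simp [Matrix.one_apply]
    · intro b _ hb; simp [Matrix.one_apply, hb]
    · simp
  have honecolS : ∀ (l : Fin n ⊕ Fin n),
      ∑ j, (1 : Matrix (Fin n ⊕ Fin n) (Fin n ⊕ Fin n) ℝ) j l = 1 := by
    intro l
    rw [Finset.sum_eq_single l]
    · simp [Matrix.one_apply]
    · intro b _ hb; simp [Matrix.one_apply, hb]
    · simp
  have hcolM : ∀ l, ∑ j, M j l = 1 := by
    intro l
    rw [Fintype.sum_sum_type]
    cases l with
    | inl l =>
      simp only [hMdef, Matrix.fromBlocks_apply₁₁, Matrix.fromBlocks_apply₂₁,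
        Matrix.sub_apply]
      rw [Finset.sum_sub_distrib, honecol l]; ring
    | inr l =>
      simp only [hMdef, Matrix.fromBlocks_apply₁₂, Matrix.fromBlocks_apply₂₂,
        Matrix.sub_apply, Matrix.smul_apply, smul_eq_mul]
      rw [Finset.sum_sub_distrib, hBcol l]; ring
  have hcol : ∀ (m : ℕ) l, ∑ j, (M ^ m) j l = 1 := by
    intro m
    induction m with
    | zero =>
      intro l
      simp only [pow_zero]
      exact honecolS l
    | succ m ih =>
      intro l
      calc ∑ j, (M ^ (m + 1)) j l = ∑ j, ∑ i, M j i * (M ^ m) i l := by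
            apply Finset.sum_congr rfl; intro j _; rw [pow_succ', Matrix.mul_apply]
        _ = ∑ i, (∑ j, M j i) * (M ^ m) i l := by
            rw [Finset.sum_comm]
            apply Finset.sum_congr rfl; intro i _
            rw [Finset.sum_mul]
        _ = ∑ i, (M ^ m) i l := by
            apply Finset.sum_congr rfl; intro i _
            rw [hcolM i, one_mul]
        _ = 1 := ih l
  -- entrywise bounds from hM
  have hMent1 : ∀ (m : ℕ) (i : Fin n) (l : Fin n ⊕ Fin n),
      |(M ^ m) (Sum.inl i) l - (n:ℝ)⁻¹| ≤ Γ * γ ^ m := by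
    intro m i l
    have h := hM m (Sum.inl i)
    have heq : (M ^ m - Mlim) (Sum.inl i) l
        = (M ^ m) (Sum.inl i) l - (n:ℝ)⁻¹ := by
      cases l <;> simp [hLdef, Matrix.sub_apply]
    rw [← heq]
    exact le_trans (Finset.single_le_sum
      (f := fun j => |((M ^ m - Mlim) (Sum.inl i) j)|)
      (fun j _ => abs_nonneg _) (Finset.mem_univ l)) h
  have hMent2 : ∀ (m : ℕ) (i : Fin n) (l : Fin n ⊕ Fin n),
      |(M ^ m) (Sum.inr i) l| ≤ Γ * γ ^ m := by
    intro m i l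
    have h := hM m (Sum.inr i)
    have heq : (M ^ m - Mlim) (Sum.inr i) l
        = (M ^ m) (Sum.inr i) l := by
      cases l <;> simp [hLdef, Matrix.sub_apply]
    rw [← heq]
    exact le_trans (Finset.single_le_sum
      (f := fun j => |((M ^ m - Mlim) (Sum.inr i) j)|)
      (fun j _ => abs_nonneg _) (Finset.mem_univ l)) h
  -- basic positivity
  have hgnn : ∀ k, 0 ≤ g k := by
    intro k; rw [hg k]; exact Finset.sum_nonneg fun i _ => norm_nonneg _
  have hGsum : ∀ s, (∑ l, ‖G s l‖) = g s := by
    intro s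
    rw [Fintype.sum_sum_type, hg s]
    simp [hGdef]
  -- the weighted geometric sums
  set Q : ℕ → ℝ := fun k => Γ * ∑ s ∈ range k, γ ^ (k - 1 - s) * g s with hQdef
  have hQ0 : Q 0 = 0 := by simp [hQdef]
  have hQrec : ∀ k, Q (k + 1) = γ * Q k + Γ * g k := by
    intro k
    simp only [hQdef]
    rw [Finset.sum_range_succ, Nat.add_sub_cancel, Nat.sub_self, pow_zero, one_mul]
    have : ∀ s ∈ range k, γ ^ (k - s) * g s = γ * (γ ^ (k - 1 - s) * g s) := by
      intro s hs
      rw [Finset.mem_range] at hs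
      rw [show k - s = (k - 1 - s) + 1 by omega, pow_succ']
      ring
    rw [Finset.sum_congr rfl this, ← Finset.mul_sum]
    ring
  have hQnn : ∀ k, 0 ≤ Q k := by
    intro k
    apply mul_nonneg hΓ.le
    apply Finset.sum_nonneg
    intro s _
    exact mul_nonneg (pow_nonneg hγ0.le _) (hgnn s)
  -- consensus bounds
  have hzsum : ∀ k, zbar k = (n:ℝ)⁻¹ • ∑ j, u k j := by
    intro k
    rw [hzbar k, Fintype.sum_sum_type]
    simp [hudef]
  have hzrepr : ∀ k, zbar k = ∑ s ∈ range k, ∑ l, (n:ℝ)⁻¹ • G s l := by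
    intro k
    rw [hzsum k]
    have h1 : (∑ j, u k j) = ∑ s ∈ range k, ∑ l, (∑ j, (M ^ (k - 1 - s)) j l) • G s l := by
      calc (∑ j, u k j) = ∑ j, ∑ s ∈ range k, ∑ l, ((M ^ (k - 1 - s)) j l) • G s l := by
            apply Finset.sum_congr rfl; intro j _; rw [hrepr k j]
        _ = ∑ s ∈ range k, ∑ l, ∑ j, ((M ^ (k - 1 - s)) j l) • G s l := by
            rw [Finset.sum_comm]
            apply Finset.sum_congr rfl; intro s _
            rw [Finset.sum_comm]
        _ = ∑ s ∈ range k, ∑ l, (∑ j, (M ^ (k - 1 - s)) j l) • G s l := by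
            apply Finset.sum_congr rfl; intro s _
            apply Finset.sum_congr rfl; intro l _
            rw [Finset.sum_smul]
    rw [h1]
    rw [Finset.smul_sum]
    apply Finset.sum_congr rfl; intro s _
    rw [Finset.smul_sum]
    apply Finset.sum_congr rfl; intro l _
    rw [hcol (k - 1 - s) l, one_smul]
  have hcons : ∀ k i, ‖x k i - zbar k‖ ≤ Q k := by
    intro k i
    have hx' : x k i = u k (Sum.inl i) := by simp [hudef]
    have hdiff : x k i - zbar k
        = ∑ s ∈ range k, ∑ l, (((M ^ (k - 1 - s)) (Sum.inl i) l) - (n:ℝ)⁻¹) • G s l := by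
      rw [hx', hrepr k (Sum.inl i), hzrepr k, ← Finset.sum_sub_distrib]
      apply Finset.sum_congr rfl; intro s _
      rw [← Finset.sum_sub_distrib]
      apply Finset.sum_congr rfl; intro l _
      rw [sub_smul]
    rw [hdiff]
    calc ‖∑ s ∈ range k, ∑ l, (((M ^ (k - 1 - s)) (Sum.inl i) l) - (n:ℝ)⁻¹) • G s l‖
        ≤ ∑ s ∈ range k, ‖∑ l, (((M ^ (k - 1 - s)) (Sum.inl i) l) - (n:ℝ)⁻¹) • G s l‖ :=
          norm_sum_le _ _
      _ ≤ ∑ s ∈ range k, Γ * γ ^ (k - 1 - s) * g s := by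
          apply Finset.sum_le_sum
          intro s _
          calc ‖∑ l, (((M ^ (k - 1 - s)) (Sum.inl i) l) - (n:ℝ)⁻¹) • G s l‖
              ≤ ∑ l, ‖(((M ^ (k - 1 - s)) (Sum.inl i) l) - (n:ℝ)⁻¹) • G s l‖ :=
                norm_sum_le _ _
            _ ≤ ∑ l, Γ * γ ^ (k - 1 - s) * ‖G s l‖ := by
                apply Finset.sum_le_sum
                intro l _
                rw [norm_smul, Real.norm_eq_abs]
                exact mul_le_mul_of_nonneg_right (hMent1 (k - 1 - s) i l) (norm_nonneg _)
            _ = Γ * γ ^ (k - 1 - s) * g s := by rw [← Finset.mul_sum, hGsum s]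
      _ = Q k := by
          simp only [hQdef]
          rw [Finset.mul_sum]
          apply Finset.sum_congr rfl; intro s _
          ring
  have hyb : ∀ k i, ‖y (k + 1) i‖ ≤ γ * Q k := by
    intro k i
    have hy' : y (k + 1) i = u (k + 1) (Sum.inr i) := by simp [hudef]
    have h1 : y (k + 1) i = ∑ s ∈ range k, ∑ l, ((M ^ (k - s)) (Sum.inr i) l) • G s l := by
      rw [hy', hrepr (k + 1) (Sum.inr i), Finset.sum_range_succ]
      simp only [Nat.add_sub_cancel, Nat.sub_self, pow_zero]
      rw [honeS (G k) (Sum.inr i)]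
      simp [hGdef]
    rw [h1]
    calc ‖∑ s ∈ range k, ∑ l, ((M ^ (k - s)) (Sum.inr i) l) • G s l‖
        ≤ ∑ s ∈ range k, ‖∑ l, ((M ^ (k - s)) (Sum.inr i) l) • G s l‖ := norm_sum_le _ _
      _ ≤ ∑ s ∈ range k, Γ * γ ^ (k - s) * g s := by
          apply Finset.sum_le_sum
          intro s _
          calc ‖∑ l, ((M ^ (k - s)) (Sum.inr i) l) • G s l‖
              ≤ ∑ l, ‖((M ^ (k - s)) (Sum.inr i) l) • G s l‖ := norm_sum_le _ _
            _ ≤ ∑ l, Γ * γ ^ (k - s) * ‖G s l‖ := by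
                apply Finset.sum_le_sum
                intro l _
                rw [norm_smul, Real.norm_eq_abs]
                exact mul_le_mul_of_nonneg_right (hMent2 (k - s) i l) (norm_nonneg _)
            _ = Γ * γ ^ (k - s) * g s := by rw [← Finset.mul_sum, hGsum s]
      _ = γ * Q k := by
          simp only [hQdef]
          rw [Finset.mul_sum, Finset.mul_sum]
          apply Finset.sum_congr rfl
          intro s hs
          rw [Finset.mem_range] at hs
          rw [show k - s = (k - 1 - s) + 1 by omega, pow_succ']
          ring
  have hyQ : ∀ k i, ‖y k i‖ ≤ Q k := by
    intro k i
    cases k with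
    | zero => rw [hy0 i, hQ0]; simp
    | succ k =>
      calc ‖y (k + 1) i‖ ≤ γ * Q k := hyb k i
        _ ≤ Q (k + 1) := by
            rw [hQrec k]
            have := mul_nonneg hΓ.le (hgnn k)
            linarith
  -- the evolution of the average
  have hzstep : ∀ k, zbar (k + 1) = zbar k + (n:ℝ)⁻¹ • ∑ i, gv k i := by
    intro k
    rw [hzrepr (k + 1), hzrepr k, Finset.sum_range_succ]
    congr 1
    rw [Finset.smul_sum, Fintype.sum_sum_type]
    simp [hGdef]
  -- Lipschitz / subgradient / projection facts
  have hlip : ∀ (i : Fin n) u v, f i u ≤ f i v + B * ‖u - v‖ :=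
    fun i => ddps_lip (f i) (hconv i) B (hsubB i)
  have hproj := ddps_proj_inner X hXne hXcv P hPmem hPproj
  have hdB : ∀ k i, ‖d k i‖ ≤ B := fun k i => hsubB i (x k i) (d k i) (hd k i)
  have hxmem : ∀ k i, x k i ∈ X := by
    intro k i
    cases k with
    | zero => rw [hx0 i]; exact hX0
    | succ k => rw [hxupd k i]; exact hPmem _
  have hqmem : ∀ k i, (∑ j, A i j • x k j) ∈ X := fun k i =>
    hXcv.sum_mem (fun j _ => hAnn i j) (hArow i) (fun j _ => hxmem k j)
  set pp : ℕ → Fin n → EuclideanSpace ℝ (Fin p) := fun k i =>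
    x (k + 1) i - (∑ j, A i j • x k j + ε • y k i - α k • d k i) with hppdef
  have hp_inner : ∀ k i, ⟪pp k i, x (k + 1) i - xs⟫ ≤ 0 := by
    intro k i
    have h1 := hproj (∑ j, A i j • x k j + ε • y k i - α k • d k i) xs hxsX
    have e1 : pp k i
        = -(((∑ j, A i j • x k j + ε • y k i - α k • d k i))
          - P (∑ j, A i j • x k j + ε • y k i - α k • d k i)) := by
      simp only [hppdef]
      rw [hxupd k i]
      abel
    have e2 : x (k + 1) i - xs
        = -(xs - P (∑ j, A i j • x k j + ε • y k i - α k • d k i)) := by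
      rw [hxupd k i]; abel
    rw [e1, e2, inner_neg_neg]
    exact h1
  have hp_norm : ∀ k i, ‖pp k i‖ ≤ ε * ‖y k i‖ + B * α k := by
    intro k i
    have h1 := hPproj (∑ j, A i j • x k j + ε • y k i - α k • d k i)
      (∑ j, A i j • x k j) (hqmem k i)
    have e : (∑ j, A i j • x k j)
        - (∑ j, A i j • x k j + ε • y k i - α k • d k i)
        = α k • d k i - ε • y k i := by abel
    calc ‖pp k i‖
        = ‖P (∑ j, A i j • x k j + ε • y k i - α k • d k i)
            - (∑ j, A i j • x k j + ε • y k i - α k • d k i)‖ := by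
          simp only [hppdef]; rw [hxupd k i]
      _ ≤ ‖α k • d k i - ε • y k i‖ := by rw [← e]; exact h1
      _ ≤ ‖α k • d k i‖ + ‖ε • y k i‖ := norm_sub_le _ _
      _ = |α k| * ‖d k i‖ + |ε| * ‖y k i‖ := by
          rw [norm_smul, norm_smul, Real.norm_eq_abs, Real.norm_eq_abs]
      _ ≤ ε * ‖y k i‖ + B * α k := by
          rw [abs_of_nonneg (hαnn k), abs_of_pos hε]
          have h2 := mul_le_mul_of_nonneg_left (hdB k i) (hαnn k)
          linarith
  have hgvp : ∀ k i, gv k i = pp k i - α k • d k i := by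
    intro k i; simp only [hppdef]; rw [hgv k i]; abel
  have hgvb : ∀ k i, ‖gv k i‖ ≤ ε * ‖y k i‖ + 2 * B * α k := by
    intro k i
    rw [hgvp k i]
    calc ‖pp k i - α k • d k i‖ ≤ ‖pp k i‖ + ‖α k • d k i‖ := norm_sub_le _ _
      _ ≤ (ε * ‖y k i‖ + B * α k) + |α k| * ‖d k i‖ := by
          rw [norm_smul, Real.norm_eq_abs]
          exact add_le_add (hp_norm k i) le_rfl
      _ ≤ ε * ‖y k i‖ + 2 * B * α k := by
          rw [abs_of_nonneg (hαnn k)]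
          have h2 := mul_le_mul_of_nonneg_left (hdB k i) (hαnn k)
          linarith
  -- bounds on g
  have hgb0 : g 0 ≤ 2 * n * B * α 0 := by
    rw [hg 0]
    have hper : ∀ i : Fin n, ‖gv 0 i‖ ≤ 2 * B * α 0 := by
      intro i
      have h1 := hgvb 0 i
      rw [hy0 i] at h1
      simpa using h1
    calc ∑ i, ‖gv 0 i‖ ≤ ∑ _i : Fin n, 2 * B * α 0 :=
          Finset.sum_le_sum fun i _ => hper i
      _ = 2 * n * B * α 0 := by
          rw [Finset.sum_const, Finset.card_univ, Fintype.card_fin, nsmul_eq_mul]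
          ring
  have hgbS : ∀ k, g (k + 1) ≤ ε * n * γ * Q k + 2 * n * B * α (k + 1) := by
    intro k
    rw [hg (k + 1)]
    have hper : ∀ i : Fin n, ‖gv (k + 1) i‖ ≤ ε * (γ * Q k) + 2 * B * α (k + 1) := by
      intro i
      have h1 := hgvb (k + 1) i
      have h2 := mul_le_mul_of_nonneg_left (hyb k i) hε.le
      linarith
    calc ∑ i, ‖gv (k + 1) i‖
        ≤ ∑ _i : Fin n, (ε * (γ * Q k) + 2 * B * α (k + 1)) :=
          Finset.sum_le_sum fun i _ => hper i
      _ = ε * n * γ * Q k + 2 * n * B * α (k + 1) := by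
          rw [Finset.sum_const, Finset.card_univ, Fintype.card_fin, nsmul_eq_mul]
          ring
  -- the comparison sequence h
  have h1γ : (0:ℝ) < 1 - γ := by linarith
  set β : ℝ := (7 + γ) / 8 with hβdef
  have hβγ : γ ≤ β := by rw [hβdef]; linarith
  have hβ1 : β < 1 := by rw [hβdef]; linarith
  have hβ78 : (7:ℝ)/8 ≤ β := by rw [hβdef]; linarith
  have hβ0 : (0:ℝ) < β := by linarith
  set h : ℕ → ℝ := fun k => ∑ s ∈ range (k + 1), β ^ (k - s) * α s with hhdef
  have hh0 : h 0 = α 0 := by simp [hhdef]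
  have hhrec : ∀ k, h (k + 1) = β * h k + α (k + 1) := by
    intro k
    simp only [hhdef]
    rw [Finset.sum_range_succ, Nat.sub_self, pow_zero, one_mul]
    have e : ∀ s ∈ range (k + 1), β ^ (k + 1 - s) * α s = β * (β ^ (k - s) * α s) := by
      intro s hs
      rw [Finset.mem_range] at hs
      rw [show k + 1 - s = (k - s) + 1 by omega, pow_succ']
      ring
    rw [Finset.sum_congr rfl e, ← Finset.mul_sum]
  have hhnn : ∀ k, 0 ≤ h k := by
    intro k
    apply Finset.sum_nonneg
    intro s _
    exact mul_nonneg (pow_nonneg hβ0.le _) (hαnn s)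
  have hαh : ∀ k, α k ≤ h k := by
    intro k
    have h1 := Finset.single_le_sum (f := fun s => β ^ (k - s) * α s)
      (fun s _ => mul_nonneg (pow_nonneg hβ0.le _) (hαnn s))
      (Finset.self_mem_range_succ k)
    simpa using h1
  -- smallness of epsilon
  have hkey : ε * n * Γ * γ < (1 - γ) / 2 := by
    have h2 : (0:ℝ) < 2 * (n:ℝ) * Γ * γ := by positivity
    rw [lt_div_iff₀ h2] at hεsmall
    nlinarith
  -- constants
  set C : ℝ := 6 * n * B with hCdef
  have hC0 : (0:ℝ) < C := by rw [hCdef]; positivity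
  set C' : ℝ := 8 * Γ * C / (7 * (1 - γ)) with hC'def
  have hC'0 : (0:ℝ) < C' := by rw [hC'def]; positivity
  -- the main induction: g and Q are dominated by multiples of h
  have hind : ∀ k, g k ≤ C * h k ∧ Q k ≤ C' * h k := by
    intro k
    induction k with
    | zero =>
      constructor
      · calc g 0 ≤ 2 * n * B * α 0 := hgb0
          _ ≤ C * h 0 := by
              rw [hh0, hCdef]
              nlinarith [hαnn 0, hn', hB]
      · rw [hQ0]
        exact mul_nonneg hC'0.le (hhnn 0)
    | succ k ih =>
      obtain ⟨ihg, ihQ⟩ := ih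
      have hhk1 : β * h k ≤ h (k + 1) := by
        rw [hhrec k]; linarith [hαnn (k + 1)]
      have hhk : 0 ≤ h k := hhnn k
      constructor
      · have e0 : ε * n * γ * C' ≤ 2/3 * C * β := by
          rw [hC'def]
          have e1 : ε * ↑n * γ * (8 * Γ * C / (7 * (1 - γ)))
              = (ε * ↑n * Γ * γ) * (8 * C) / (7 * (1 - γ)) := by ring
          rw [e1, div_le_iff₀ (by positivity)]
          have k1 : ε * ↑n * Γ * γ * (8 * C) ≤ (1 - γ) / 2 * (8 * C) :=
            mul_le_mul_of_nonneg_right hkey.le (by positivity)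
          nlinarith [mul_pos hC0 h1γ, mul_le_mul_of_nonneg_right hβ78
            (le_of_lt (mul_pos (mul_pos (by norm_num : (0:ℝ) < 14/3) hC0) h1γ))]
        calc g (k + 1) ≤ ε * n * γ * Q k + 2 * n * B * α (k + 1) := hgbS k
          _ ≤ ε * n * γ * (C' * h k) + 2 * n * B * h (k + 1) := by
              have m1 := mul_le_mul_of_nonneg_left ihQ
                (by positivity : (0:ℝ) ≤ ε * n * γ)
              have m2 := mul_le_mul_of_nonneg_left (hαh (k + 1))
                (by positivity : (0:ℝ) ≤ 2 * (n:ℝ) * B)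
              linarith
          _ ≤ 2/3 * C * (β * h k) + 1/3 * C * h (k + 1) := by
              have m3 : ε * n * γ * (C' * h k) ≤ 2/3 * C * β * h k := by
                have := mul_le_mul_of_nonneg_right e0 hhk
                nlinarith
              have e4 : 2 * (n:ℝ) * B = 1/3 * C := by rw [hCdef]; ring
              rw [e4]
              linarith
          _ ≤ 2/3 * C * h (k + 1) + 1/3 * C * h (k + 1) := by
              have := mul_le_mul_of_nonneg_left hhk1 (by linarith : (0:ℝ) ≤ 2/3 * C)
              linarith
          _ = C * h (k + 1) := by ring
      · have e5 : γ * C' + Γ * C = β * C' := by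
          rw [hC'def, hβdef]
          field_simp
          ring
        calc Q (k + 1) = γ * Q k + Γ * g k := hQrec k
          _ ≤ γ * (C' * h k) + Γ * (C * h k) := by
              have m1 := mul_le_mul_of_nonneg_left ihQ hγ0.le
              have m2 := mul_le_mul_of_nonneg_left ihg hΓ.le
              linarith
          _ = (γ * C' + Γ * C) * h k := by ring
          _ = C' * (β * h k) := by rw [e5]; ring
          _ ≤ C' * h (k + 1) := mul_le_mul_of_nonneg_left hhk1 hC'0.le
  have hgC : ∀ k, g k ≤ C * h k := fun k => (hind k).1
  have hQC : ∀ k, Q k ≤ C' * h k := fun k => (hind k).2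
  -- square-summability bounds
  set TA : ℝ := ∑' k, (α k) ^ 2 with hTAdef
  have hTA : ∀ K, ∑ k ∈ range K, (α k) ^ 2 ≤ TA := fun K =>
    hα2.sum_le_tsum (range K) (fun i _ => sq_nonneg _)
  have hTA' : ∀ K, ∑ k ∈ range K, (α (k + 1)) ^ 2 ≤ TA := by
    intro K
    have h1 : ∑ k ∈ range (K + 1), (α k) ^ 2
        = ∑ k ∈ range K, (α (k + 1)) ^ 2 + (α 0) ^ 2 := Finset.sum_range_succ'
          (fun k => (α k) ^ 2) K
    have h2 := hTA (K + 1)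
    nlinarith [sq_nonneg (α 0)]
  set TH : ℝ := ((α 0) ^ 2 + (1 + β ^ 2) / (1 - β ^ 2) * TA) * (2 / (1 - β ^ 2)) with hTHdef
  have hTH : ∀ K, ∑ k ∈ range K, (h k) ^ 2 ≤ TH := by
    have h1 := ddps_sq_sum β hβ0.le hβ1 h (fun k => α (k + 1)) hhnn
      (fun k => hαnn (k + 1)) (fun k => le_of_eq (hhrec k)) TA hTA'
    rw [hh0] at h1
    exact h1
  have hTHnn : (0:ℝ) ≤ TH := le_trans (by simp) (hTH 0)
  -- norms of the aggregate update
  have hgS : ∀ k, ‖∑ i, gv k i‖ ≤ g k := by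
    intro k; rw [hg k]; exact norm_sum_le _ _
  have hzdiffnorm : ∀ k, ‖zbar (k + 1) - zbar k‖ ≤ g k := by
    intro k
    have e : zbar (k + 1) - zbar k = (n:ℝ)⁻¹ • ∑ i, gv k i := by
      rw [hzstep k]; abel
    rw [e, norm_smul, Real.norm_eq_abs, abs_of_nonneg (inv_nonneg.2 hn'.le)]
    calc (n:ℝ)⁻¹ * ‖∑ i, gv k i‖ ≤ 1 * g k := by
          apply mul_le_mul _ (hgS k) (norm_nonneg _) zero_le_one
          exact inv_le_one_of_one_le₀ hn1
      _ = g k := one_mul _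
  have hzb0 : zbar 0 = 0 := by
    rw [hzbar 0]
    have e1 : (∑ i, x 0 i : EuclideanSpace ℝ (Fin p)) = 0 := by
      rw [Finset.sum_eq_zero]; intro i _; exact hx0 i
    have e2 : (∑ i, y 0 i : EuclideanSpace ℝ (Fin p)) = 0 := by
      rw [Finset.sum_eq_zero]; intro i _; exact hy0 i
    rw [e1, e2]; simp
  -- per-step master inequality
  have hmaster : ∀ k, 2 * (n:ℝ)⁻¹ * (α k * ((∑ i, f i (zbar k)) - fstar))
      ≤ (‖zbar k - xs‖ ^ 2 - ‖zbar (k + 1) - xs‖ ^ 2)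
        + 2 * (n:ℝ)⁻¹ * (n * (ε * Q k + B * α k) * (Q (k + 1) + g k)
          + 2 * n * B * α k * Q k + (n:ℝ)⁻¹ * (g k) ^ 2 / 2) := by
    intro k
    have hQg : (0:ℝ) ≤ Q (k + 1) + g k := add_nonneg (hQnn (k + 1)) (hgnn k)
    have hIi : ∀ i : Fin n, ⟪zbar k - xs, gv k i⟫
        ≤ (ε * ‖y k i‖ + B * α k) * (Q (k + 1) + g k)
          - α k * (f i (zbar k) - f i xs) + 2 * B * α k * Q k := by
      intro i
      have hsplit : ⟪zbar k - xs, gv k i⟫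
          = ⟪zbar k - xs, pp k i⟫ - α k * ⟪zbar k - xs, d k i⟫ := by
        rw [hgvp k i, inner_sub_right, real_inner_smul_right]
      have hza : ‖zbar k - x (k + 1) i‖ ≤ Q (k + 1) + g k := by
        have e : zbar k - x (k + 1) i
            = -((x (k + 1) i - zbar (k + 1)) + (zbar (k + 1) - zbar k)) := by abel
        rw [e, norm_neg]
        exact le_trans (norm_add_le _ _)
          (add_le_add (hcons (k + 1) i) (hzdiffnorm k))
      have h1 : ⟪zbar k - xs, pp k i⟫
          ≤ (ε * ‖y k i‖ + B * α k) * (Q (k + 1) + g k) := by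
        have e : (zbar k - xs : EuclideanSpace ℝ (Fin p))
            = (zbar k - x (k + 1) i) + (x (k + 1) i - xs) := by abel
        rw [e, inner_add_left]
        have h2 : ⟪x (k + 1) i - xs, pp k i⟫ ≤ 0 := by
          rw [real_inner_comm]; exact hp_inner k i
        have h3 := real_inner_le_norm (zbar k - x (k + 1) i) (pp k i)
        have h4 : ‖zbar k - x (k + 1) i‖ * ‖pp k i‖
            ≤ (Q (k + 1) + g k) * (ε * ‖y k i‖ + B * α k) :=
          mul_le_mul hza (hp_norm k i) (norm_nonneg _) hQg
        have h5 : (Q (k + 1) + g k) * (ε * ‖y k i‖ + B * α k)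
            = (ε * ‖y k i‖ + B * α k) * (Q (k + 1) + g k) := mul_comm _ _
        linarith
      have hzx : ‖zbar k - x k i‖ ≤ Q k := by rw [norm_sub_rev]; exact hcons k i
      have h6 : f i (x k i) - f i xs ≤ ⟪x k i - xs, d k i⟫ := by
        have hh := hd k i xs
        have e : ⟪d k i, xs - x k i⟫ = -⟪x k i - xs, d k i⟫ := by
          rw [real_inner_comm, ← inner_neg_left]
          congr 1
          abel
        rw [e] at hh
        linarith
      have h7 : f i (zbar k) ≤ f i (x k i) + B * ‖zbar k - x k i‖ := hlip i _ _
      have h7' : f i (zbar k) ≤ f i (x k i) + B * Q k := by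
        have := mul_le_mul_of_nonneg_left hzx hB.le
        linarith
      have h8 : -(B * Q k) ≤ ⟪zbar k - x k i, d k i⟫ := by
        have hle := real_inner_le_norm (x k i - zbar k) (d k i)
        have e : ⟪x k i - zbar k, d k i⟫ = -⟪zbar k - x k i, d k i⟫ := by
          rw [← inner_neg_left]; congr 1; abel
        have hb : ‖x k i - zbar k‖ * ‖d k i‖ ≤ Q k * B := by
          apply mul_le_mul (hcons k i) (hdB k i) (norm_nonneg _) (hQnn k)
        rw [e] at hle
        nlinarith
      have h9 : ⟪zbar k - xs, d k i⟫
          = ⟪zbar k - x k i, d k i⟫ + ⟪x k i - xs, d k i⟫ := by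
        rw [← inner_add_left]
        congr 1
        abel
      rw [hsplit, h9]
      have hab : f i (zbar k) - f i xs - 2 * (B * Q k)
          ≤ ⟪zbar k - x k i, d k i⟫ + ⟪x k i - xs, d k i⟫ := by linarith
      have m := mul_le_mul_of_nonneg_left hab (hαnn k)
      linarith
    -- summing over agents
    have hsumI : ∑ i, ⟪zbar k - xs, gv k i⟫
        ≤ n * (ε * Q k + B * α k) * (Q (k + 1) + g k)
          - α k * ((∑ i, f i (zbar k)) - fstar) + 2 * n * B * α k * Q k := by
      have step1 : ∑ i, ⟪zbar k - xs, gv k i⟫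
          ≤ ∑ i, ((ε * ‖y k i‖ + B * α k) * (Q (k + 1) + g k)
              - α k * (f i (zbar k) - f i xs) + 2 * B * α k * Q k) :=
        Finset.sum_le_sum fun i _ => hIi i
      have step2 : ∑ i, ((ε * ‖y k i‖ + B * α k) * (Q (k + 1) + g k)
              - α k * (f i (zbar k) - f i xs) + 2 * B * α k * Q k)
          ≤ ∑ i, ((ε * Q k + B * α k) * (Q (k + 1) + g k)
              - α k * (f i (zbar k) - f i xs) + 2 * B * α k * Q k) := by
        apply Finset.sum_le_sum
        intro i _
        have m1 : ε * ‖y k i‖ ≤ ε * Q k := mul_le_mul_of_nonneg_left (hyQ k i) hε.le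
        have m2 : (ε * ‖y k i‖ + B * α k) * (Q (k + 1) + g k)
            ≤ (ε * Q k + B * α k) * (Q (k + 1) + g k) :=
          mul_le_mul_of_nonneg_right (by linarith) hQg
        linarith
      have step3 : ∑ i, ((ε * Q k + B * α k) * (Q (k + 1) + g k)
              - α k * (f i (zbar k) - f i xs) + 2 * B * α k * Q k)
          = n * (ε * Q k + B * α k) * (Q (k + 1) + g k)
              - α k * ((∑ i, f i (zbar k)) - fstar) + 2 * n * B * α k * Q k := by
        rw [Finset.sum_add_distrib, Finset.sum_sub_distrib, Finset.sum_const,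
          Finset.sum_const, Finset.card_univ, Fintype.card_fin, nsmul_eq_mul,
          nsmul_eq_mul]
        have e1 : ∑ i, α k * (f i (zbar k) - f i xs)
            = α k * ((∑ i, f i (zbar k)) - fstar) := by
          rw [← Finset.mul_sum, Finset.sum_sub_distrib, hxsf]
        rw [e1]
        ring
      linarith
    -- quadratic expansion of the distance to xs
    have hquad : ‖zbar (k + 1) - xs‖ ^ 2
        = ‖zbar k - xs‖ ^ 2 + 2 * ((n:ℝ)⁻¹ * ∑ i, ⟪zbar k - xs, gv k i⟫)
          + ‖(n:ℝ)⁻¹ • ∑ i, gv k i‖ ^ 2 := by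
      have e : zbar (k + 1) - xs = (zbar k - xs) + (n:ℝ)⁻¹ • ∑ i, gv k i := by
        rw [hzstep k]; abel
      rw [e, norm_add_sq_real, real_inner_smul_right, inner_sum]
    have hlast : ‖(n:ℝ)⁻¹ • ∑ i, gv k i‖ ^ 2 ≤ (n:ℝ)⁻¹ * (n:ℝ)⁻¹ * (g k) ^ 2 := by
      rw [norm_smul, Real.norm_eq_abs, abs_of_nonneg (inv_nonneg.2 hn'.le), mul_pow]
      have h1 := hgS k
      have h3 : ‖∑ i, gv k i‖ ^ 2 ≤ (g k) ^ 2 := by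
        nlinarith [norm_nonneg (∑ i, gv k i)]
      calc ((n:ℝ)⁻¹) ^ 2 * ‖∑ i, gv k i‖ ^ 2
          ≤ ((n:ℝ)⁻¹) ^ 2 * (g k) ^ 2 :=
            mul_le_mul_of_nonneg_left h3 (sq_nonneg _)
        _ = (n:ℝ)⁻¹ * (n:ℝ)⁻¹ * (g k) ^ 2 := by ring
    have m1 : 2 * (n:ℝ)⁻¹ * (∑ i, ⟪zbar k - xs, gv k i⟫)
        ≤ 2 * (n:ℝ)⁻¹ * (n * (ε * Q k + B * α k) * (Q (k + 1) + g k)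
          - α k * ((∑ i, f i (zbar k)) - fstar) + 2 * n * B * α k * Q k) :=
      mul_le_mul_of_nonneg_left hsumI (by positivity)
    linarith only [hquad, m1, hlast]
  -- pointwise bound on the remainder
  set K2 : ℝ := 2 * n * (ε * C' + B) * (C' + C) + 2 * n * B * C' + C ^ 2 with hK2def
  have hrem : ∀ k, n * (ε * Q k + B * α k) * (Q (k + 1) + g k)
      + 2 * n * B * α k * Q k + (n:ℝ)⁻¹ * (g k) ^ 2 / 2
      ≤ K2 * ((h k) ^ 2 + (h (k + 1)) ^ 2) := by
    intro k
    have hk := hhnn k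
    have hk1 := hhnn (k + 1)
    have a1 : ε * Q k + B * α k ≤ (ε * C' + B) * h k := by
      have m1 := mul_le_mul_of_nonneg_left (hQC k) hε.le
      have m2 := mul_le_mul_of_nonneg_left (hαh k) hB.le
      linarith only [m1, m2]
    have hεC'B : (0:ℝ) ≤ ε * C' + B := add_nonneg (mul_nonneg hε.le hC'0.le) hB.le
    have a2 : Q (k + 1) + g k ≤ (C' + C) * (h k + h (k + 1)) := by
      have m1 := hQC (k + 1)
      have m2 := hgC k
      linarith only [m1, m2, mul_nonneg hC'0.le hk, mul_nonneg hC0.le hk1]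
    have a1nn : (0:ℝ) ≤ ε * Q k + B * α k :=
      add_nonneg (mul_nonneg hε.le (hQnn k)) (mul_nonneg hB.le (hαnn k))
    have a2nn : (0:ℝ) ≤ Q (k + 1) + g k := add_nonneg (hQnn (k + 1)) (hgnn k)
    have b1 : (ε * Q k + B * α k) * (Q (k + 1) + g k)
        ≤ ((ε * C' + B) * h k) * ((C' + C) * (h k + h (k + 1))) :=
      mul_le_mul a1 a2 a2nn (mul_nonneg hεC'B hk)
    have b2 : h k * (h k + h (k + 1)) ≤ 2 * ((h k) ^ 2 + (h (k + 1)) ^ 2) := by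
      linarith only [sq_nonneg (h k - h (k + 1)), sq_nonneg (h k), sq_nonneg (h (k + 1))]
    have c1 : n * ((ε * Q k + B * α k) * (Q (k + 1) + g k))
        ≤ n * (ε * C' + B) * (C' + C) * (2 * ((h k) ^ 2 + (h (k + 1)) ^ 2)) := by
      have hc : (0:ℝ) ≤ (ε * C' + B) * (C' + C) :=
        mul_nonneg hεC'B (by linarith [hC'0, hC0])
      have d1 : ((ε * C' + B) * h k) * ((C' + C) * (h k + h (k + 1)))
          = ((ε * C' + B) * (C' + C)) * (h k * (h k + h (k + 1))) := by ring
      have d2 : (ε * Q k + B * α k) * (Q (k + 1) + g k)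
          ≤ ((ε * C' + B) * (C' + C)) * (2 * ((h k) ^ 2 + (h (k + 1)) ^ 2)) := by
        calc (ε * Q k + B * α k) * (Q (k + 1) + g k)
            ≤ ((ε * C' + B) * h k) * ((C' + C) * (h k + h (k + 1))) := b1
          _ = ((ε * C' + B) * (C' + C)) * (h k * (h k + h (k + 1))) := d1
          _ ≤ ((ε * C' + B) * (C' + C)) * (2 * ((h k) ^ 2 + (h (k + 1)) ^ 2)) :=
              mul_le_mul_of_nonneg_left b2 hc
      have d3 := mul_le_mul_of_nonneg_left d2 hn'.le
      linarith
    have c2 : 2 * n * B * α k * Q k ≤ 2 * n * B * C' * ((h k) ^ 2 + (h (k + 1)) ^ 2) := by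
      have m1 : α k * Q k ≤ h k * (C' * h k) :=
        mul_le_mul (hαh k) (hQC k) (hQnn k) hk
      have m2 : (0:ℝ) ≤ 2 * (n:ℝ) * B := by positivity
      have m3 := mul_le_mul_of_nonneg_left m1 m2
      have m4 : (0:ℝ) ≤ 2 * (n:ℝ) * B * C' * (h (k + 1)) ^ 2 :=
        mul_nonneg (mul_nonneg m2 hC'0.le) (sq_nonneg _)
      linarith only [m3, m4]
    have c3 : (n:ℝ)⁻¹ * (g k) ^ 2 / 2 ≤ C ^ 2 * ((h k) ^ 2 + (h (k + 1)) ^ 2) := by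
      have m1 : (g k) ^ 2 ≤ (C * h k) ^ 2 := pow_le_pow_left₀ (hgnn k) (hgC k) 2
      have m2 : (n:ℝ)⁻¹ ≤ 1 := inv_le_one_of_one_le₀ hn1
      have m3 : (0:ℝ) ≤ (n:ℝ)⁻¹ := inv_nonneg.2 hn'.le
      have m4 : (0:ℝ) ≤ (1 - (n:ℝ)⁻¹) * (g k) ^ 2 :=
        mul_nonneg (by linarith) (sq_nonneg _)
      have m5 : (0:ℝ) ≤ C ^ 2 * (h (k + 1)) ^ 2 :=
        mul_nonneg (sq_nonneg _) (sq_nonneg _)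
      linarith only [m1, m4, m5, sq_nonneg (g k)]
    rw [hK2def]
    linarith only [c1, c2, c3]
  -- summing up
  refine ⟨(n / 2) * ‖(0:EuclideanSpace ℝ (Fin p)) - xs‖ ^ 2 + K2 * (TH + TH), fun K => ?_⟩
  have htel : ∑ k ∈ range (K + 1),
      (‖zbar k - xs‖ ^ 2 - ‖zbar (k + 1) - xs‖ ^ 2)
      = ‖zbar 0 - xs‖ ^ 2 - ‖zbar (K + 1) - xs‖ ^ 2 :=
    Finset.sum_range_sub' (fun k => ‖zbar k - xs‖ ^ 2) (K + 1)
  have hsummaster : 2 * (n:ℝ)⁻¹ * ∑ k ∈ range (K + 1),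
        (α k * ((∑ i, f i (zbar k)) - fstar))
      ≤ (‖zbar 0 - xs‖ ^ 2 - ‖zbar (K + 1) - xs‖ ^ 2)
        + 2 * (n:ℝ)⁻¹ * (K2 * (TH + TH)) := by
    have s1 : ∑ k ∈ range (K + 1), 2 * (n:ℝ)⁻¹ * (α k * ((∑ i, f i (zbar k)) - fstar))
        ≤ ∑ k ∈ range (K + 1), ((‖zbar k - xs‖ ^ 2 - ‖zbar (k + 1) - xs‖ ^ 2)
          + 2 * (n:ℝ)⁻¹ * (n * (ε * Q k + B * α k) * (Q (k + 1) + g k)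
            + 2 * n * B * α k * Q k + (n:ℝ)⁻¹ * (g k) ^ 2 / 2)) :=
      Finset.sum_le_sum fun k _ => hmaster k
    have s2 : ∑ k ∈ range (K + 1), ((‖zbar k - xs‖ ^ 2 - ‖zbar (k + 1) - xs‖ ^ 2)
          + 2 * (n:ℝ)⁻¹ * (n * (ε * Q k + B * α k) * (Q (k + 1) + g k)
            + 2 * n * B * α k * Q k + (n:ℝ)⁻¹ * (g k) ^ 2 / 2))
        ≤ (‖zbar 0 - xs‖ ^ 2 - ‖zbar (K + 1) - xs‖ ^ 2)
          + 2 * (n:ℝ)⁻¹ * (K2 * (TH + TH)) := by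
      rw [Finset.sum_add_distrib, htel]
      have s3 : ∑ k ∈ range (K + 1), 2 * (n:ℝ)⁻¹
            * (n * (ε * Q k + B * α k) * (Q (k + 1) + g k)
              + 2 * n * B * α k * Q k + (n:ℝ)⁻¹ * (g k) ^ 2 / 2)
          ≤ 2 * (n:ℝ)⁻¹ * (K2 * (TH + TH)) := by
        rw [← Finset.mul_sum]
        apply mul_le_mul_of_nonneg_left _ (by positivity : (0:ℝ) ≤ 2 * (n:ℝ)⁻¹)
        calc ∑ k ∈ range (K + 1), (n * (ε * Q k + B * α k) * (Q (k + 1) + g k)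
              + 2 * n * B * α k * Q k + (n:ℝ)⁻¹ * (g k) ^ 2 / 2)
            ≤ ∑ k ∈ range (K + 1), K2 * ((h k) ^ 2 + (h (k + 1)) ^ 2) :=
              Finset.sum_le_sum fun k _ => hrem k
          _ = K2 * (∑ k ∈ range (K + 1), (h k) ^ 2
              + ∑ k ∈ range (K + 1), (h (k + 1)) ^ 2) := by
              rw [← Finset.sum_add_distrib, Finset.mul_sum]
          _ ≤ K2 * (TH + TH) := by
              have hK2nn : (0:ℝ) ≤ K2 := by
                rw [hK2def]
                have w1 : (0:ℝ) ≤ ε * C' + B :=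
                  add_nonneg (mul_nonneg hε.le hC'0.le) hB.le
                have w2 : (0:ℝ) ≤ 2 * (n:ℝ) * (ε * C' + B) * (C' + C) :=
                  mul_nonneg (mul_nonneg (by linarith) w1) (by linarith [hC'0, hC0])
                have w3 : (0:ℝ) ≤ 2 * (n:ℝ) * B * C' :=
                  mul_nonneg (mul_nonneg (by linarith) hB.le) hC'0.le
                linarith only [w2, w3, sq_nonneg C]
              have t1 := hTH (K + 1)
              have t2 : ∑ k ∈ range (K + 1), (h (k + 1)) ^ 2 ≤ TH := by
                have e1 : ∑ k ∈ range (K + 2), (h k) ^ 2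
                    = ∑ k ∈ range (K + 1), (h (k + 1)) ^ 2 + (h 0) ^ 2 :=
                  Finset.sum_range_succ' (fun k => (h k) ^ 2) (K + 1)
                have t3 := hTH (K + 2)
                linarith only [e1, t3, sq_nonneg (h 0)]
              exact mul_le_mul_of_nonneg_left (by linarith only [t1, t2]) hK2nn
      linarith only [s3]
    calc 2 * (n:ℝ)⁻¹ * ∑ k ∈ range (K + 1), (α k * ((∑ i, f i (zbar k)) - fstar))
        = ∑ k ∈ range (K + 1), 2 * (n:ℝ)⁻¹ * (α k * ((∑ i, f i (zbar k)) - fstar)) := by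
          rw [Finset.mul_sum]
      _ ≤ _ := le_trans s1 s2
  -- conclude
  have hnormdrop : ‖zbar 0 - xs‖ ^ 2 - ‖zbar (K + 1) - xs‖ ^ 2
      ≤ ‖(0:EuclideanSpace ℝ (Fin p)) - xs‖ ^ 2 := by
    rw [hzb0]
    linarith only [sq_nonneg (‖zbar (K + 1) - xs‖)]
  have hfinal : 2 * (n:ℝ)⁻¹ * ∑ k ∈ range (K + 1),
        (α k * ((∑ i, f i (zbar k)) - fstar))
      ≤ ‖(0:EuclideanSpace ℝ (Fin p)) - xs‖ ^ 2 + 2 * (n:ℝ)⁻¹ * (K2 * (TH + TH)) := by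
    linarith only [hsummaster, hnormdrop]
  have hmul := mul_le_mul_of_nonneg_left hfinal (by positivity : (0:ℝ) ≤ (n:ℝ) / 2)
  have e1 : (n:ℝ) / 2 * (2 * (n:ℝ)⁻¹ * ∑ k ∈ range (K + 1),
        (α k * ((∑ i, f i (zbar k)) - fstar)))
      = ∑ k ∈ range (K + 1), (α k * ((∑ i, f i (zbar k)) - fstar)) := by
    field_simp
  have e2 : (n:ℝ) / 2 * (‖(0:EuclideanSpace ℝ (Fin p)) - xs‖ ^ 2
        + 2 * (n:ℝ)⁻¹ * (K2 * (TH + TH)))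
      = (n / 2) * ‖(0:EuclideanSpace ℝ (Fin p)) - xs‖ ^ 2 + K2 * (TH + TH) := by
    field_simp
  rw [e1, e2] at hmul
  calc ∑ k ∈ range (K + 1), α k * ((∑ i, f i (zbar k)) - fstar)
      = ∑ k ∈ range (K + 1), (α k * ((∑ i, f i (zbar k)) - fstar)) := rfl
    _ ≤ _ := hmul
end
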